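/- For all f, g, g' ∈ H with a(f,g) ≡ a(f,g') (mod K²), there exist a, b, c, d ∈ K with a·d ≠ b·c such that g' = (a⁴·g + b⁴)/(c⁴·g + d⁴). (The set of g ∈ H with a given value of a(f,·) modulo K² consists of a single Γ-orbit, where Γ = PGL₂(K⁴).) -/

import Mathlib

/-- The set `K² = {x² : x ∈ K}` of squares of `K`. -/
def sqSet (K : Type*) [Field K] : Set K := {x | ∃ y : K, y ^ 2 = x}

/-- `K` is two-dimensional as a vector space over its subfield `K²`:
there is some `g ∉ K²`, and for every such `g` the pair `(1, g)` spans `K`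
over `K²`. -/
def TwoDimOverSquares (K : Type*) [Field K] : Prop :=
  (∃ g : K, g ∉ sqSet K) ∧
    ∀ g : K, g ∉ sqSet K → ∀ x : K, ∃ a b : K, x = a ^ 2 + b ^ 2 * g

/-- The quantity `a(f,g) = (f₁²·f₃² + f₂⁴)·g / (f₃⁴·g² + f₁⁴)`, where
`f = f₀⁴ + f₁⁴·g + f₂⁴·g² + f₃⁴·g³` is the expansion of `f` with respect to `g`
in the basis `{1, g, g², g³}` of `K` over `K⁴`. -/
noncomputable def aOf {K : Type*} [Field K] (g f₁ f₂ f₃ : K) : K :=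
  ((f₁ ^ 2 * f₃ ^ 2 + f₂ ^ 4) * g) / (f₃ ^ 4 * g ^ 2 + f₁ ^ 4)

private lemma frob2 {K : Type*} [Field K] (h2 : (2:K) = 0) {x y : K} (h : x^2 = y^2) : x = y := by
  have h3 : (x + y)^2 = 0 := by linear_combination h + (x*y + y^2)*h2
  have h4 : x + y = 0 := pow_eq_zero_iff two_ne_zero |>.mp h3
  linear_combination h4 - y*h2

private lemma indep2 {K : Type*} [Field K] (h2 : (2:K) = 0) {g : K} (hg : g ∉ sqSet K)
    {a b c d : K} (h : a^2 + b^2*g = c^2 + d^2*g) : a = c ∧ b = d := by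
  have hbd : b = d := by
    by_contra hne
    have hbd0 : b + d ≠ 0 := fun h0 => hne (by linear_combination h0 - d*h2)
    refine hg ⟨(a+c)/(b+d), ?_⟩
    field_simp
    linear_combination h + (a*c + c^2 - g*b^2 - g*b*d)*h2
  rw [hbd] at h
  exact ⟨frob2 h2 (add_right_cancel h), hbd⟩

set_option maxHeartbeats 4000000 in
/-- The fiber of `a(f,·)` modulo `K²` through any `g ∈ H` is a single `Γ`-orbit:
if `a(f,g) ≡ a(f,g') (mod K²)` then `g'` is a fractional linear transform of `g`
by an element of `Γ = PGL₂(K⁴)`. -/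
theorem a_fiber_single_orbit (K : Type*) [Field K] [CharP K 2]
    (hdim : TwoDimOverSquares K)
    (f g g' : K) (hf : f ∉ sqSet K) (hg : g ∉ sqSet K) (hg' : g' ∉ sqSet K)
    (p₀ p₁ p₂ p₃ : K) (hp : f = p₀ ^ 4 + p₁ ^ 4 * g + p₂ ^ 4 * g ^ 2 + p₃ ^ 4 * g ^ 3)
    (q₀ q₁ q₂ q₃ : K)
    (hq : f = q₀ ^ 4 + q₁ ^ 4 * g' + q₂ ^ 4 * g' ^ 2 + q₃ ^ 4 * g' ^ 3)
    (hcongr : aOf g p₁ p₂ p₃ + aOf g' q₁ q₂ q₃ ∈ sqSet K) :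
    ∃ a b c d : K, a * d ≠ b * c ∧
      g' = (a ^ 4 * g + b ^ 4) / (c ^ 4 * g + d ^ 4) := by
  have h2 : (2:K) = 0 := by exact_mod_cast CharP.cast_eq_zero K 2
  obtain ⟨α, β, hab⟩ := hdim.2 g hg g'
  obtain ⟨r₀, r₂, ha⟩ := hdim.2 g hg α
  obtain ⟨r₁, r₃, hb⟩ := hdim.2 g hg β
  rw [ha, hb] at hab
  subst hab
  have hgne : g ≠ 0 := fun h0 => hg ⟨0, by rw [h0]; ring⟩
  -- v' ≠ 0
  have hvpne : q₁^2 + q₃^2*((r₀^2 + r₂^2*g)^2 + (r₁^2 + r₃^2*g)^2*g) ≠ 0 := by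
    intro h0
    refine hf ⟨q₀^2 + q₂^2*((r₀^2 + r₂^2*g)^2 + (r₁^2 + r₃^2*g)^2*g), ?_⟩
    linear_combination (-1 : K)*hq - ((q₁^2 + q₃^2*((r₀^2 + r₂^2*g)^2 + (r₁^2 + r₃^2*g)^2*g))*((r₀^2 + r₂^2*g)^2 + (r₁^2 + r₃^2*g)^2*g))*h0 + (q₁ ^ 2 * q₃ ^ 2 * r₃ ^ 8 * g ^ 6 + 2 * q₁ ^ 2 * q₃ ^ 2 * r₂ ^ 4 * r₃ ^ 4 * g ^ 5 + q₁ ^ 2 * q₃ ^ 2 * r₂ ^ 8 * g ^ 4 + 4 * q₁ ^ 2 * q₃ ^ 2 * r₁ ^ 2 * r₃ ^ 6 * g ^ 5 + 4 * q₁ ^ 2 * q₃ ^ 2 * r₁ ^ 2 * r₂ ^ 4 * r₃ ^ 2 * g ^ 4 + 6 * q₁ ^ 2 * q₃ ^ 2 * r₁ ^ 4 * r₃ ^ 4 * g ^ 4 + 2 * q₁ ^ 2 * q₃ ^ 2 * r₁ ^ 4 * r₂ ^ 4 * g ^ 3 + 4 * q₁ ^ 2 * q₃ ^ 2 * r₁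 ^ 6 * r₃ ^ 2 * g ^ 3 + q₁ ^ 2 * q₃ ^ 2 * r₁ ^ 8 * g ^ 2 + 4 * q₁ ^ 2 * q₃ ^ 2 * r₀ ^ 2 * r₂ ^ 2 * r₃ ^ 4 * g ^ 4 + 4 * q₁ ^ 2 * q₃ ^ 2 * r₀ ^ 2 * r₂ ^ 6 * g ^ 3 + 8 * q₁ ^ 2 * q₃ ^ 2 * r₀ ^ 2 * r₁ ^ 2 * r₂ ^ 2 * r₃ ^ 2 * g ^ 3 + 4 * q₁ ^ 2 * q₃ ^ 2 * r₀ ^ 2 * r₁ ^ 4 * r₂ ^ 2 * g ^ 2 + 2 * q₁ ^ 2 * q₃ ^ 2 * r₀ ^ 4 * r₃ ^ 4 * g ^ 3 + 6 * q₁ ^ 2 * q₃ ^ 2 * r₀ ^ 4 * r₂ ^ 4 * g ^ 2 + 4 * q₁ ^ 2 * q₃ ^ 2 * r₀ ^ 4 * r₁ ^ 2 * r₃ ^ 2 * g ^ 2 + 2 * q₁ ^ 2 * q₃ ^ 2 * r₀ ^ 4 * r₁ ^ 4 * g + 4 * q₁ ^ 2 * q₃ ^ 2 * r₀ ^ 6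 * r₂ ^ 2 * g + q₁ ^ 2 * q₃ ^ 2 * r₀ ^ 8 + q₀ ^ 2 * q₂ ^ 2 * r₃ ^ 4 * g ^ 3 + q₀ ^ 2 * q₂ ^ 2 * r₂ ^ 4 * g ^ 2 + 2 * q₀ ^ 2 * q₂ ^ 2 * r₁ ^ 2 * r₃ ^ 2 * g ^ 2 + q₀ ^ 2 * q₂ ^ 2 * r₁ ^ 4 * g + 2 * q₀ ^ 2 * q₂ ^ 2 * r₀ ^ 2 * r₂ ^ 2 * g + q₀ ^ 2 * q₂ ^ 2 * r₀ ^ 4)*h2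
  -- v ≠ 0
  have hvne : p₁^2 + p₃^2*g ≠ 0 := by
    intro h0
    refine hf ⟨p₀^2 + p₂^2*g, ?_⟩
    linear_combination (-1 : K)*hp - ((p₁^2 + p₃^2*g)*g)*h0 + (p₁ ^ 2 * p₃ ^ 2 * g ^ 2 + p₀ ^ 2 * p₂ ^ 2 * g)*h2
  have hd1 : p₃^4*g^2 + p₁^4 ≠ 0 := by
    intro h0
    refine hvne (pow_eq_zero_iff two_ne_zero |>.mp (?_ : (p₁^2 + p₃^2*g)^2 = 0))
    linear_combination h0 + (p₁^2*p₃^2*g)*h2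
  have hd2 : q₃^4*((r₀^2 + r₂^2*g)^2 + (r₁^2 + r₃^2*g)^2*g)^2 + q₁^4 ≠ 0 := by
    intro h0
    refine hvpne (pow_eq_zero_iff two_ne_zero |>.mp (?_ : (q₁^2 + q₃^2*((r₀^2 + r₂^2*g)^2 + (r₁^2 + r₃^2*g)^2*g))^2 = 0))
    linear_combination h0 + (q₁^2*q₃^2*((r₀^2 + r₂^2*g)^2 + (r₁^2 + r₃^2*g)^2*g))*h2
  have key := hp.symm.trans hq
  have hE : (p₀^2 + p₂^2*g)^2 + (p₁^2 + p₃^2*g)^2*g = (q₀^2 + q₂^2*((r₀^2 + r₂^2*g)^2 + (r₁^2 + r₃^2*g)^2*g) + (q₁^2 + q₃^2*((r₀^2 + r₂^2*g)^2 + (r₁^2 + r₃^2*g)^2*g))*(r₀^2 + r₂^2*g))^2 + ((q₁^2 + q₃^2*((r₀^2 + r₂^2*g)^2 + (r₁^2 + r₃^2*g)^2*g))*(r₁^2 + r₃^2*g))^2*g := by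
    linear_combination key + ((-1 : K) * q₂ ^ 2 * q₃ ^ 2 * r₂ ^ 2 * r₃ ^ 8 * g ^ 7 + (-2 : K) * q₂ ^ 2 * q₃ ^ 2 * r₂ ^ 6 * r₃ ^ 4 * g ^ 6 + (-1 : K) * q₂ ^ 2 * q₃ ^ 2 * r₂ ^ 10 * g ^ 5 + (-4 : K) * q₂ ^ 2 * q₃ ^ 2 * r₁ ^ 2 * r₂ ^ 2 * r₃ ^ 6 * g ^ 6 + (-4 : K) * q₂ ^ 2 * q₃ ^ 2 * r₁ ^ 2 * r₂ ^ 6 * r₃ ^ 2 * g ^ 5 + (-6 : K) * q₂ ^ 2 * q₃ ^ 2 * r₁ ^ 4 * r₂ ^ 2 * r₃ ^ 4 * g ^ 5 + (-2 : K) * q₂ ^ 2 * q₃ ^ 2 * r₁ ^ 4 * r₂ ^ 6 * g ^ 4 + (-4 : K) * q₂ ^ 2 * q₃ ^ 2 * r₁ ^ 6 * r₂ ^ 2 * r₃ ^ 2 * g ^ 4 + (-1 : K) * q₂ ^ 2 * q₃ ^ 2 * r₁ ^ 8 * r₂ ^ 2 * g ^ 3 + (-1 : K) * q₂ ^ 2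 * q₃ ^ 2 * r₀ ^ 2 * r₃ ^ 8 * g ^ 6 + (-6 : K) * q₂ ^ 2 * q₃ ^ 2 * r₀ ^ 2 * r₂ ^ 4 * r₃ ^ 4 * g ^ 5 + (-5 : K) * q₂ ^ 2 * q₃ ^ 2 * r₀ ^ 2 * r₂ ^ 8 * g ^ 4 + (-4 : K) * q₂ ^ 2 * q₃ ^ 2 * r₀ ^ 2 * r₁ ^ 2 * r₃ ^ 6 * g ^ 5 + (-12 : K) * q₂ ^ 2 * q₃ ^ 2 * r₀ ^ 2 * r₁ ^ 2 * r₂ ^ 4 * r₃ ^ 2 * g ^ 4 + (-6 : K) * q₂ ^ 2 * q₃ ^ 2 * r₀ ^ 2 * r₁ ^ 4 * r₃ ^ 4 * g ^ 4 + (-6 : K) * q₂ ^ 2 * q₃ ^ 2 * r₀ ^ 2 * r₁ ^ 4 * r₂ ^ 4 * g ^ 3 + (-4 : K) * q₂ ^ 2 * q₃ ^ 2 * r₀ ^ 2 * r₁ ^ 6 * r₃ ^ 2 * g ^ 3 + (-1 : K) * q₂ ^ 2 * q₃ ^ 2 * r₀ ^ 2 * r₁ ^ 8 * g ^ 2 +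 (-6 : K) * q₂ ^ 2 * q₃ ^ 2 * r₀ ^ 4 * r₂ ^ 2 * r₃ ^ 4 * g ^ 4 + (-10 : K) * q₂ ^ 2 * q₃ ^ 2 * r₀ ^ 4 * r₂ ^ 6 * g ^ 3 + (-12 : K) * q₂ ^ 2 * q₃ ^ 2 * r₀ ^ 4 * r₁ ^ 2 * r₂ ^ 2 * r₃ ^ 2 * g ^ 3 + (-6 : K) * q₂ ^ 2 * q₃ ^ 2 * r₀ ^ 4 * r₁ ^ 4 * r₂ ^ 2 * g ^ 2 + (-2 : K) * q₂ ^ 2 * q₃ ^ 2 * r₀ ^ 6 * r₃ ^ 4 * g ^ 3 + (-10 : K) * q₂ ^ 2 * q₃ ^ 2 * r₀ ^ 6 * r₂ ^ 4 * g ^ 2 + (-4 : K) * q₂ ^ 2 * q₃ ^ 2 * r₀ ^ 6 * r₁ ^ 2 * r₃ ^ 2 * g ^ 2 + (-2 : K) * q₂ ^ 2 * q₃ ^ 2 * r₀ ^ 6 * r₁ ^ 4 * g + (-5 : K) * q₂ ^ 2 * q₃ ^ 2 * r₀ ^ 8 * r₂ ^ 2 * g + (-1 : K) * q₂ ^ 2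 * q₃ ^ 2 * r₀ ^ 10 + (-1 : K) * q₁ ^ 2 * q₃ ^ 2 * r₃ ^ 8 * g ^ 6 + (-2 : K) * q₁ ^ 2 * q₃ ^ 2 * r₂ ^ 4 * r₃ ^ 4 * g ^ 5 + (-1 : K) * q₁ ^ 2 * q₃ ^ 2 * r₂ ^ 8 * g ^ 4 + (-4 : K) * q₁ ^ 2 * q₃ ^ 2 * r₁ ^ 2 * r₃ ^ 6 * g ^ 5 + (-4 : K) * q₁ ^ 2 * q₃ ^ 2 * r₁ ^ 2 * r₂ ^ 4 * r₃ ^ 2 * g ^ 4 + (-6 : K) * q₁ ^ 2 * q₃ ^ 2 * r₁ ^ 4 * r₃ ^ 4 * g ^ 4 + (-2 : K) * q₁ ^ 2 * q₃ ^ 2 * r₁ ^ 4 * r₂ ^ 4 * g ^ 3 + (-4 : K) * q₁ ^ 2 * q₃ ^ 2 * r₁ ^ 6 * r₃ ^ 2 * g ^ 3 + (-1 : K) * q₁ ^ 2 * q₃ ^ 2 * r₁ ^ 8 * g ^ 2 + (-4 : K) * q₁ ^ 2 * q₃ ^ 2 * r₀ ^ 2 * r₂ ^ 2 * r₃ ^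 4 * g ^ 4 + (-4 : K) * q₁ ^ 2 * q₃ ^ 2 * r₀ ^ 2 * r₂ ^ 6 * g ^ 3 + (-8 : K) * q₁ ^ 2 * q₃ ^ 2 * r₀ ^ 2 * r₁ ^ 2 * r₂ ^ 2 * r₃ ^ 2 * g ^ 3 + (-4 : K) * q₁ ^ 2 * q₃ ^ 2 * r₀ ^ 2 * r₁ ^ 4 * r₂ ^ 2 * g ^ 2 + (-2 : K) * q₁ ^ 2 * q₃ ^ 2 * r₀ ^ 4 * r₃ ^ 4 * g ^ 3 + (-6 : K) * q₁ ^ 2 * q₃ ^ 2 * r₀ ^ 4 * r₂ ^ 4 * g ^ 2 + (-4 : K) * q₁ ^ 2 * q₃ ^ 2 * r₀ ^ 4 * r₁ ^ 2 * r₃ ^ 2 * g ^ 2 + (-2 : K) * q₁ ^ 2 * q₃ ^ 2 * r₀ ^ 4 * r₁ ^ 4 * g + (-4 : K) * q₁ ^ 2 * q₃ ^ 2 * r₀ ^ 6 * r₂ ^ 2 * g + (-1 : K) * q₁ ^ 2 * q₃ ^ 2 * r₀ ^ 8 + (-1 : K) * q₁ ^ 2 * q₂ ^ 2 * r₂ ^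 2 * r₃ ^ 4 * g ^ 4 + (-1 : K) * q₁ ^ 2 * q₂ ^ 2 * r₂ ^ 6 * g ^ 3 + (-2 : K) * q₁ ^ 2 * q₂ ^ 2 * r₁ ^ 2 * r₂ ^ 2 * r₃ ^ 2 * g ^ 3 + (-1 : K) * q₁ ^ 2 * q₂ ^ 2 * r₁ ^ 4 * r₂ ^ 2 * g ^ 2 + (-1 : K) * q₁ ^ 2 * q₂ ^ 2 * r₀ ^ 2 * r₃ ^ 4 * g ^ 3 + (-3 : K) * q₁ ^ 2 * q₂ ^ 2 * r₀ ^ 2 * r₂ ^ 4 * g ^ 2 + (-2 : K) * q₁ ^ 2 * q₂ ^ 2 * r₀ ^ 2 * r₁ ^ 2 * r₃ ^ 2 * g ^ 2 + (-1 : K) * q₁ ^ 2 * q₂ ^ 2 * r₀ ^ 2 * r₁ ^ 4 * g + (-3 : K) * q₁ ^ 2 * q₂ ^ 2 * r₀ ^ 4 * r₂ ^ 2 * g + (-1 : K) * q₁ ^ 2 * q₂ ^ 2 * r₀ ^ 6 + (-1 : K) * q₀ ^ 2 * q₃ ^ 2 * r₂ ^ 2 * r₃ ^ 4 * g ^ 4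 + (-1 : K) * q₀ ^ 2 * q₃ ^ 2 * r₂ ^ 6 * g ^ 3 + (-2 : K) * q₀ ^ 2 * q₃ ^ 2 * r₁ ^ 2 * r₂ ^ 2 * r₃ ^ 2 * g ^ 3 + (-1 : K) * q₀ ^ 2 * q₃ ^ 2 * r₁ ^ 4 * r₂ ^ 2 * g ^ 2 + (-1 : K) * q₀ ^ 2 * q₃ ^ 2 * r₀ ^ 2 * r₃ ^ 4 * g ^ 3 + (-3 : K) * q₀ ^ 2 * q₃ ^ 2 * r₀ ^ 2 * r₂ ^ 4 * g ^ 2 + (-2 : K) * q₀ ^ 2 * q₃ ^ 2 * r₀ ^ 2 * r₁ ^ 2 * r₃ ^ 2 * g ^ 2 + (-1 : K) * q₀ ^ 2 * q₃ ^ 2 * r₀ ^ 2 * r₁ ^ 4 * g + (-3 : K) * q₀ ^ 2 * q₃ ^ 2 * r₀ ^ 4 * r₂ ^ 2 * g + (-1 : K) * q₀ ^ 2 * q₃ ^ 2 * r₀ ^ 6 + (-1 : K) * q₀ ^ 2 * q₂ ^ 2 * r₃ ^ 4 * g ^ 3 + (-1 : K) * q₀ ^ 2 * q₂ ^ 2 *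 r₂ ^ 4 * g ^ 2 + (-2 : K) * q₀ ^ 2 * q₂ ^ 2 * r₁ ^ 2 * r₃ ^ 2 * g ^ 2 + (-1 : K) * q₀ ^ 2 * q₂ ^ 2 * r₁ ^ 4 * g + (-2 : K) * q₀ ^ 2 * q₂ ^ 2 * r₀ ^ 2 * r₂ ^ 2 * g + (-1 : K) * q₀ ^ 2 * q₂ ^ 2 * r₀ ^ 4 + (-1 : K) * q₀ ^ 2 * q₁ ^ 2 * r₂ ^ 2 * g + (-1 : K) * q₀ ^ 2 * q₁ ^ 2 * r₀ ^ 2 + p₁ ^ 2 * p₃ ^ 2 * g ^ 2 + p₀ ^ 2 * p₂ ^ 2 * g)*h2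
  obtain ⟨hE1, hE2⟩ := indep2 h2 hg hE
  have hE2' : p₁^2 + p₃^2*g = ((q₁ + q₃*(r₀^2 + r₂^2*g))*r₁ + (q₃*(r₁^2 + r₃^2*g))*r₃*g)^2 + ((q₁ + q₃*(r₀^2 + r₂^2*g))*r₃ + (q₃*(r₁^2 + r₃^2*g))*r₁)^2*g := by
    linear_combination hE2 + ((-2 : K) * q₃ ^ 2 * r₁ * r₂ ^ 2 * r₃ ^ 3 * g ^ 3 + (-2 : K) * q₃ ^ 2 * r₁ ^ 3 * r₂ ^ 2 * r₃ * g ^ 2 + (-2 : K) * q₃ ^ 2 * r₀ ^ 2 * r₁ * r₃ ^ 3 * g ^ 2 + (-2 : K) * q₃ ^ 2 * r₀ ^ 2 * r₁ ^ 3 * r₃ * g + (-1 : K) * q₁ * q₃ * r₂ ^ 2 * r₃ ^ 2 * g ^ 2 + (-2 : K) * q₁ * q₃ * r₁ * r₃ ^ 3 * g ^ 2 + (-1 : K) * q₁ * q₃ * r₁ ^ 2 * r₂ ^ 2 * g + (-2 : K) * q₁ * q₃ * r₁ ^ 3 * r₃ * g + (-1 : K) * q₁ * q₃ * r₀ ^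 2 * r₃ ^ 2 * g + (-1 : K) * q₁ * q₃ * r₀ ^ 2 * r₁ ^ 2)*h2
  obtain ⟨hp₁, hp₃⟩ := indep2 h2 hg hE2'
  have hE1' : p₀^2 + p₂^2*g = (q₀ + q₂*(r₀^2 + r₂^2*g) + (q₁ + q₃*(r₀^2 + r₂^2*g))*r₀ + (q₃*(r₁^2 + r₃^2*g))*r₂*g)^2 + (q₂*(r₁^2 + r₃^2*g) + (q₁ + q₃*(r₀^2 + r₂^2*g))*r₂ + (q₃*(r₁^2 + r₃^2*g))*r₀)^2*g := by
    linear_combination hE1 + ((-2 : K) * q₃ ^ 2 * r₀ * r₂ ^ 3 * r₃ ^ 2 * g ^ 3 + (-2 : K) * q₃ ^ 2 * r₀ * r₁ ^ 2 * r₂ ^ 3 * g ^ 2 + (-2 : K) * q₃ ^ 2 * r₀ ^ 3 * r₂ * r₃ ^ 2 * g ^ 2 + (-2 : K) * q₃ ^ 2 * r₀ ^ 3 * r₁ ^ 2 * r₂ * g + (-2 : K) * q₂ * q₃ * r₂ ^ 3 * r₃ ^ 2 * g ^ 3 + (-2 : K) * q₂ * q₃ * r₁ ^ 2 * r₂ ^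 3 * g ^ 2 + (-1 : K) * q₂ * q₃ * r₀ * r₃ ^ 4 * g ^ 3 + (-1 : K) * q₂ * q₃ * r₀ * r₂ ^ 4 * g ^ 2 + (-2 : K) * q₂ * q₃ * r₀ * r₁ ^ 2 * r₃ ^ 2 * g ^ 2 + (-1 : K) * q₂ * q₃ * r₀ * r₁ ^ 4 * g + (-2 : K) * q₂ * q₃ * r₀ ^ 2 * r₂ * r₃ ^ 2 * g ^ 2 + (-2 : K) * q₂ * q₃ * r₀ ^ 2 * r₁ ^ 2 * r₂ * g + (-2 : K) * q₂ * q₃ * r₀ ^ 3 * r₂ ^ 2 * g + (-1 : K) * q₂ * q₃ * r₀ ^ 5 + (-1 : K) * q₁ * q₃ * r₂ ^ 4 * g ^ 2 + (-2 : K) * q₁ * q₃ * r₀ * r₂ * r₃ ^ 2 * g ^ 2 + (-2 : K) * q₁ * q₃ * r₀ * r₁ ^ 2 * r₂ * g + (-2 : K) * q₁ * q₃ * r₀ ^ 2 * r₂ ^ 2 * g + (-1 : K) * q₁ * q₃ * r₀ ^ 4 + (-1 : K) * q₁ * q₂ * r₂ * r₃ ^ 2 * g ^ 2 + (-1 : K)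 * q₁ * q₂ * r₁ ^ 2 * r₂ * g + (-1 : K) * q₁ * q₂ * r₀ * r₂ ^ 2 * g + (-1 : K) * q₁ * q₂ * r₀ ^ 3 + (-1 : K) * q₀ * q₃ * r₂ * r₃ ^ 2 * g ^ 2 + (-1 : K) * q₀ * q₃ * r₁ ^ 2 * r₂ * g + (-1 : K) * q₀ * q₃ * r₀ * r₂ ^ 2 * g + (-1 : K) * q₀ * q₃ * r₀ ^ 3 + (-1 : K) * q₀ * q₂ * r₂ ^ 2 * g + (-1 : K) * q₀ * q₂ * r₀ ^ 2 + (-1 : K) * q₀ * q₁ * r₀)*h2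
  obtain ⟨hp₀, hp₂⟩ := indep2 h2 hg hE1'
  obtain ⟨y, hy⟩ := hcongr
  unfold aOf at hy
  have hy2 : y^2 * ((p₃^4*g^2 + p₁^4) * (q₃^4*((r₀^2 + r₂^2*g)^2 + (r₁^2 + r₃^2*g)^2*g)^2 + q₁^4)) =
      (p₁^2*p₃^2 + p₂^4)*g*(q₃^4*((r₀^2 + r₂^2*g)^2 + (r₁^2 + r₃^2*g)^2*g)^2 + q₁^4) + (q₁^2*q₃^2 + q₂^4)*((r₀^2 + r₂^2*g)^2 + (r₁^2 + r₃^2*g)^2*g)*(p₃^4*g^2 + p₁^4) := by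
    rw [hy, div_add_div _ _ hd1 hd2, div_mul_cancel₀ _ (mul_ne_zero hd1 hd2)]
    ring
  have hkey : ((q₁*q₃ + q₂^2)*(p₁^2 + p₃^2*g)*(r₀^2 + r₂^2*g))^2 +
      ((p₁*p₃ + p₂^2)*(q₁^2 + q₃^2*((r₀^2 + r₂^2*g)^2 + (r₁^2 + r₃^2*g)^2*g)) + (q₁*q₃ + q₂^2)*(p₁^2 + p₃^2*g)*(r₁^2 + r₃^2*g))^2*g =
      (y*(p₁^2 + p₃^2*g)*(q₁^2 + q₃^2*((r₀^2 + r₂^2*g)^2 + (r₁^2 + r₃^2*g)^2*g)))^2 + 0^2*g := by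
    linear_combination hy2 + ((-1 : K) * p₃ ^ 4 * q₃ ^ 4 * r₃ ^ 8 * g ^ 8 * y ^ 2 + (-2 : K) * p₃ ^ 4 * q₃ ^ 4 * r₂ ^ 4 * r₃ ^ 4 * g ^ 7 * y ^ 2 + (-1 : K) * p₃ ^ 4 * q₃ ^ 4 * r₂ ^ 8 * g ^ 6 * y ^ 2 + (-4 : K) * p₃ ^ 4 * q₃ ^ 4 * r₁ ^ 2 * r₃ ^ 6 * g ^ 7 * y ^ 2 + (-4 : K) * p₃ ^ 4 * q₃ ^ 4 * r₁ ^ 2 * r₂ ^ 4 * r₃ ^ 2 * g ^ 6 * y ^ 2 + (-6 : K) * p₃ ^ 4 * q₃ ^ 4 * r₁ ^ 4 * r₃ ^ 4 * g ^ 6 * y ^ 2 + (-2 : K) * p₃ ^ 4 * q₃ ^ 4 * r₁ ^ 4 * r₂ ^ 4 * g ^ 5 * y ^ 2 + (-4 : K) * p₃ ^ 4 * q₃ ^ 4 * r₁ ^ 6 * r₃ ^ 2 * g ^ 5 * y ^ 2 + (-1 : K) * p₃ ^ 4 * q₃ ^ 4 * r₁ ^ 8 * g ^ 4 * y ^ 2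 + (-4 : K) * p₃ ^ 4 * q₃ ^ 4 * r₀ ^ 2 * r₂ ^ 2 * r₃ ^ 4 * g ^ 6 * y ^ 2 + (-4 : K) * p₃ ^ 4 * q₃ ^ 4 * r₀ ^ 2 * r₂ ^ 6 * g ^ 5 * y ^ 2 + (-8 : K) * p₃ ^ 4 * q₃ ^ 4 * r₀ ^ 2 * r₁ ^ 2 * r₂ ^ 2 * r₃ ^ 2 * g ^ 5 * y ^ 2 + (-4 : K) * p₃ ^ 4 * q₃ ^ 4 * r₀ ^ 2 * r₁ ^ 4 * r₂ ^ 2 * g ^ 4 * y ^ 2 + (-2 : K) * p₃ ^ 4 * q₃ ^ 4 * r₀ ^ 4 * r₃ ^ 4 * g ^ 5 * y ^ 2 + (-6 : K) * p₃ ^ 4 * q₃ ^ 4 * r₀ ^ 4 * r₂ ^ 4 * g ^ 4 * y ^ 2 + (-4 : K) * p₃ ^ 4 * q₃ ^ 4 * r₀ ^ 4 * r₁ ^ 2 * r₃ ^ 2 * g ^ 4 * y ^ 2 + (-2 : K) * p₃ ^ 4 * q₃ ^ 4 * r₀ ^ 4 * r₁ ^ 4 * g ^ 3 * y ^ 2 +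 (-4 : K) * p₃ ^ 4 * q₃ ^ 4 * r₀ ^ 6 * r₂ ^ 2 * g ^ 3 * y ^ 2 + (-1 : K) * p₃ ^ 4 * q₃ ^ 4 * r₀ ^ 8 * g ^ 2 * y ^ 2 + p₃ ^ 4 * q₂ ^ 4 * r₃ ^ 4 * g ^ 5 + p₃ ^ 4 * q₂ ^ 4 * r₂ ^ 4 * g ^ 4 + 2 * p₃ ^ 4 * q₂ ^ 4 * r₁ ^ 2 * r₃ ^ 2 * g ^ 4 + p₃ ^ 4 * q₂ ^ 4 * r₁ ^ 4 * g ^ 3 + 2 * p₃ ^ 4 * q₂ ^ 4 * r₀ ^ 2 * r₂ ^ 2 * g ^ 3 + p₃ ^ 4 * q₂ ^ 4 * r₀ ^ 4 * g ^ 2 + p₃ ^ 4 * q₁ * q₂ ^ 2 * q₃ * r₃ ^ 4 * g ^ 5 + p₃ ^ 4 * q₁ * q₂ ^ 2 * q₃ * r₂ ^ 4 * g ^ 4 + 2 * p₃ ^ 4 * q₁ * q₂ ^ 2 * q₃ * r₁ ^ 2 * r₃ ^ 2 * g ^ 4 + p₃ ^ 4 * q₁ * q₂ ^ 2 * q₃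 * r₁ ^ 4 * g ^ 3 + 2 * p₃ ^ 4 * q₁ * q₂ ^ 2 * q₃ * r₀ ^ 2 * r₂ ^ 2 * g ^ 3 + p₃ ^ 4 * q₁ * q₂ ^ 2 * q₃ * r₀ ^ 4 * g ^ 2 + p₃ ^ 4 * q₁ ^ 2 * q₃ ^ 2 * r₃ ^ 4 * g ^ 5 + (-1 : K) * p₃ ^ 4 * q₁ ^ 2 * q₃ ^ 2 * r₃ ^ 4 * g ^ 5 * y ^ 2 + p₃ ^ 4 * q₁ ^ 2 * q₃ ^ 2 * r₂ ^ 4 * g ^ 4 + (-1 : K) * p₃ ^ 4 * q₁ ^ 2 * q₃ ^ 2 * r₂ ^ 4 * g ^ 4 * y ^ 2 + 2 * p₃ ^ 4 * q₁ ^ 2 * q₃ ^ 2 * r₁ ^ 2 * r₃ ^ 2 * g ^ 4 + (-2 : K) * p₃ ^ 4 * q₁ ^ 2 * q₃ ^ 2 * r₁ ^ 2 * r₃ ^ 2 * g ^ 4 * y ^ 2 + p₃ ^ 4 * q₁ ^ 2 * q₃ ^ 2 * r₁ ^ 4 * g ^ 3 + (-1 : K) * p₃ ^ 4 * q₁ ^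 2 * q₃ ^ 2 * r₁ ^ 4 * g ^ 3 * y ^ 2 + 2 * p₃ ^ 4 * q₁ ^ 2 * q₃ ^ 2 * r₀ ^ 2 * r₂ ^ 2 * g ^ 3 + (-2 : K) * p₃ ^ 4 * q₁ ^ 2 * q₃ ^ 2 * r₀ ^ 2 * r₂ ^ 2 * g ^ 3 * y ^ 2 + p₃ ^ 4 * q₁ ^ 2 * q₃ ^ 2 * r₀ ^ 4 * g ^ 2 + (-1 : K) * p₃ ^ 4 * q₁ ^ 2 * q₃ ^ 2 * r₀ ^ 4 * g ^ 2 * y ^ 2 + (-1 : K) * p₃ ^ 4 * q₁ ^ 4 * g ^ 2 * y ^ 2 + p₂ ^ 2 * p₃ ^ 2 * q₂ ^ 2 * q₃ ^ 2 * r₃ ^ 6 * g ^ 6 + p₂ ^ 2 * p₃ ^ 2 * q₂ ^ 2 * q₃ ^ 2 * r₂ ^ 4 * r₃ ^ 2 * g ^ 5 + 3 * p₂ ^ 2 * p₃ ^ 2 * q₂ ^ 2 * q₃ ^ 2 * r₁ ^ 2 * r₃ ^ 4 * g ^ 5 + p₂ ^ 2 * p₃ ^ 2 * q₂ ^ 2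 * q₃ ^ 2 * r₁ ^ 2 * r₂ ^ 4 * g ^ 4 + 3 * p₂ ^ 2 * p₃ ^ 2 * q₂ ^ 2 * q₃ ^ 2 * r₁ ^ 4 * r₃ ^ 2 * g ^ 4 + p₂ ^ 2 * p₃ ^ 2 * q₂ ^ 2 * q₃ ^ 2 * r₁ ^ 6 * g ^ 3 + 2 * p₂ ^ 2 * p₃ ^ 2 * q₂ ^ 2 * q₃ ^ 2 * r₀ ^ 2 * r₂ ^ 2 * r₃ ^ 2 * g ^ 4 + 2 * p₂ ^ 2 * p₃ ^ 2 * q₂ ^ 2 * q₃ ^ 2 * r₀ ^ 2 * r₁ ^ 2 * r₂ ^ 2 * g ^ 3 + p₂ ^ 2 * p₃ ^ 2 * q₂ ^ 2 * q₃ ^ 2 * r₀ ^ 4 * r₃ ^ 2 * g ^ 3 + p₂ ^ 2 * p₃ ^ 2 * q₂ ^ 2 * q₃ ^ 2 * r₀ ^ 4 * r₁ ^ 2 * g ^ 2 + p₂ ^ 2 * p₃ ^ 2 * q₁ * q₃ ^ 3 * r₃ ^ 6 * g ^ 6 + p₂ ^ 2 * p₃ ^ 2 * q₁ * q₃ ^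 3 * r₂ ^ 4 * r₃ ^ 2 * g ^ 5 + 3 * p₂ ^ 2 * p₃ ^ 2 * q₁ * q₃ ^ 3 * r₁ ^ 2 * r₃ ^ 4 * g ^ 5 + p₂ ^ 2 * p₃ ^ 2 * q₁ * q₃ ^ 3 * r₁ ^ 2 * r₂ ^ 4 * g ^ 4 + 3 * p₂ ^ 2 * p₃ ^ 2 * q₁ * q₃ ^ 3 * r₁ ^ 4 * r₃ ^ 2 * g ^ 4 + p₂ ^ 2 * p₃ ^ 2 * q₁ * q₃ ^ 3 * r₁ ^ 6 * g ^ 3 + 2 * p₂ ^ 2 * p₃ ^ 2 * q₁ * q₃ ^ 3 * r₀ ^ 2 * r₂ ^ 2 * r₃ ^ 2 * g ^ 4 + 2 * p₂ ^ 2 * p₃ ^ 2 * q₁ * q₃ ^ 3 * r₀ ^ 2 * r₁ ^ 2 * r₂ ^ 2 * g ^ 3 + p₂ ^ 2 * p₃ ^ 2 * q₁ * q₃ ^ 3 * r₀ ^ 4 * r₃ ^ 2 * g ^ 3 + p₂ ^ 2 * p₃ ^ 2 * q₁ * q₃ ^ 3 * r₀ ^ 4 * r₁ ^ 2 * g ^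 2 + p₂ ^ 2 * p₃ ^ 2 * q₁ ^ 2 * q₂ ^ 2 * r₃ ^ 2 * g ^ 3 + p₂ ^ 2 * p₃ ^ 2 * q₁ ^ 2 * q₂ ^ 2 * r₁ ^ 2 * g ^ 2 + p₂ ^ 2 * p₃ ^ 2 * q₁ ^ 3 * q₃ * r₃ ^ 2 * g ^ 3 + p₂ ^ 2 * p₃ ^ 2 * q₁ ^ 3 * q₃ * r₁ ^ 2 * g ^ 2 + p₂ ^ 4 * q₃ ^ 4 * r₃ ^ 8 * g ^ 7 + 2 * p₂ ^ 4 * q₃ ^ 4 * r₂ ^ 4 * r₃ ^ 4 * g ^ 6 + p₂ ^ 4 * q₃ ^ 4 * r₂ ^ 8 * g ^ 5 + 4 * p₂ ^ 4 * q₃ ^ 4 * r₁ ^ 2 * r₃ ^ 6 * g ^ 6 + 4 * p₂ ^ 4 * q₃ ^ 4 * r₁ ^ 2 * r₂ ^ 4 * r₃ ^ 2 * g ^ 5 + 6 * p₂ ^ 4 * q₃ ^ 4 * r₁ ^ 4 * r₃ ^ 4 * g ^ 5 + 2 * p₂ ^ 4 * q₃ ^ 4 * r₁ ^ 4 * r₂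 ^ 4 * g ^ 4 + 4 * p₂ ^ 4 * q₃ ^ 4 * r₁ ^ 6 * r₃ ^ 2 * g ^ 4 + p₂ ^ 4 * q₃ ^ 4 * r₁ ^ 8 * g ^ 3 + 4 * p₂ ^ 4 * q₃ ^ 4 * r₀ ^ 2 * r₂ ^ 2 * r₃ ^ 4 * g ^ 5 + 4 * p₂ ^ 4 * q₃ ^ 4 * r₀ ^ 2 * r₂ ^ 6 * g ^ 4 + 8 * p₂ ^ 4 * q₃ ^ 4 * r₀ ^ 2 * r₁ ^ 2 * r₂ ^ 2 * r₃ ^ 2 * g ^ 4 + 4 * p₂ ^ 4 * q₃ ^ 4 * r₀ ^ 2 * r₁ ^ 4 * r₂ ^ 2 * g ^ 3 + 2 * p₂ ^ 4 * q₃ ^ 4 * r₀ ^ 4 * r₃ ^ 4 * g ^ 4 + 6 * p₂ ^ 4 * q₃ ^ 4 * r₀ ^ 4 * r₂ ^ 4 * g ^ 3 + 4 * p₂ ^ 4 * q₃ ^ 4 * r₀ ^ 4 * r₁ ^ 2 * r₃ ^ 2 * g ^ 3 + 2 * p₂ ^ 4 * q₃ ^ 4 * r₀ ^ 4 * r₁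 ^ 4 * g ^ 2 + 4 * p₂ ^ 4 * q₃ ^ 4 * r₀ ^ 6 * r₂ ^ 2 * g ^ 2 + p₂ ^ 4 * q₃ ^ 4 * r₀ ^ 8 * g + p₂ ^ 4 * q₁ ^ 2 * q₃ ^ 2 * r₃ ^ 4 * g ^ 4 + p₂ ^ 4 * q₁ ^ 2 * q₃ ^ 2 * r₂ ^ 4 * g ^ 3 + 2 * p₂ ^ 4 * q₁ ^ 2 * q₃ ^ 2 * r₁ ^ 2 * r₃ ^ 2 * g ^ 3 + p₂ ^ 4 * q₁ ^ 2 * q₃ ^ 2 * r₁ ^ 4 * g ^ 2 + 2 * p₂ ^ 4 * q₁ ^ 2 * q₃ ^ 2 * r₀ ^ 2 * r₂ ^ 2 * g ^ 2 + p₂ ^ 4 * q₁ ^ 2 * q₃ ^ 2 * r₀ ^ 4 * g + p₂ ^ 4 * q₁ ^ 4 * g + p₁ * p₃ ^ 3 * q₂ ^ 2 * q₃ ^ 2 * r₃ ^ 6 * g ^ 6 + p₁ * p₃ ^ 3 * q₂ ^ 2 * q₃ ^ 2 * r₂ ^ 4 * r₃ ^ 2 * g ^ 5 + 3 * p₁ *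 p₃ ^ 3 * q₂ ^ 2 * q₃ ^ 2 * r₁ ^ 2 * r₃ ^ 4 * g ^ 5 + p₁ * p₃ ^ 3 * q₂ ^ 2 * q₃ ^ 2 * r₁ ^ 2 * r₂ ^ 4 * g ^ 4 + 3 * p₁ * p₃ ^ 3 * q₂ ^ 2 * q₃ ^ 2 * r₁ ^ 4 * r₃ ^ 2 * g ^ 4 + p₁ * p₃ ^ 3 * q₂ ^ 2 * q₃ ^ 2 * r₁ ^ 6 * g ^ 3 + 2 * p₁ * p₃ ^ 3 * q₂ ^ 2 * q₃ ^ 2 * r₀ ^ 2 * r₂ ^ 2 * r₃ ^ 2 * g ^ 4 + 2 * p₁ * p₃ ^ 3 * q₂ ^ 2 * q₃ ^ 2 * r₀ ^ 2 * r₁ ^ 2 * r₂ ^ 2 * g ^ 3 + p₁ * p₃ ^ 3 * q₂ ^ 2 * q₃ ^ 2 * r₀ ^ 4 * r₃ ^ 2 * g ^ 3 + p₁ * p₃ ^ 3 * q₂ ^ 2 * q₃ ^ 2 * r₀ ^ 4 * r₁ ^ 2 * g ^ 2 + p₁ * p₃ ^ 3 * q₁ * q₃ ^ 3 * r₃ ^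 6 * g ^ 6 + p₁ * p₃ ^ 3 * q₁ * q₃ ^ 3 * r₂ ^ 4 * r₃ ^ 2 * g ^ 5 + 3 * p₁ * p₃ ^ 3 * q₁ * q₃ ^ 3 * r₁ ^ 2 * r₃ ^ 4 * g ^ 5 + p₁ * p₃ ^ 3 * q₁ * q₃ ^ 3 * r₁ ^ 2 * r₂ ^ 4 * g ^ 4 + 3 * p₁ * p₃ ^ 3 * q₁ * q₃ ^ 3 * r₁ ^ 4 * r₃ ^ 2 * g ^ 4 + p₁ * p₃ ^ 3 * q₁ * q₃ ^ 3 * r₁ ^ 6 * g ^ 3 + 2 * p₁ * p₃ ^ 3 * q₁ * q₃ ^ 3 * r₀ ^ 2 * r₂ ^ 2 * r₃ ^ 2 * g ^ 4 + 2 * p₁ * p₃ ^ 3 * q₁ * q₃ ^ 3 * r₀ ^ 2 * r₁ ^ 2 * r₂ ^ 2 * g ^ 3 + p₁ * p₃ ^ 3 * q₁ * q₃ ^ 3 * r₀ ^ 4 * r₃ ^ 2 * g ^ 3 + p₁ * p₃ ^ 3 * q₁ * q₃ ^ 3 * r₀ ^ 4 * r₁ ^ 2 * g ^ 2 + p₁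 * p₃ ^ 3 * q₁ ^ 2 * q₂ ^ 2 * r₃ ^ 2 * g ^ 3 + p₁ * p₃ ^ 3 * q₁ ^ 2 * q₂ ^ 2 * r₁ ^ 2 * g ^ 2 + p₁ * p₃ ^ 3 * q₁ ^ 3 * q₃ * r₃ ^ 2 * g ^ 3 + p₁ * p₃ ^ 3 * q₁ ^ 3 * q₃ * r₁ ^ 2 * g ^ 2 + p₁ * p₂ ^ 2 * p₃ * q₃ ^ 4 * r₃ ^ 8 * g ^ 7 + 2 * p₁ * p₂ ^ 2 * p₃ * q₃ ^ 4 * r₂ ^ 4 * r₃ ^ 4 * g ^ 6 + p₁ * p₂ ^ 2 * p₃ * q₃ ^ 4 * r₂ ^ 8 * g ^ 5 + 4 * p₁ * p₂ ^ 2 * p₃ * q₃ ^ 4 * r₁ ^ 2 * r₃ ^ 6 * g ^ 6 + 4 * p₁ * p₂ ^ 2 * p₃ * q₃ ^ 4 * r₁ ^ 2 * r₂ ^ 4 * r₃ ^ 2 * g ^ 5 + 6 * p₁ * p₂ ^ 2 * p₃ * q₃ ^ 4 * r₁ ^ 4 * r₃ ^ 4 * g ^ 5 + 2 * p₁ * p₂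 ^ 2 * p₃ * q₃ ^ 4 * r₁ ^ 4 * r₂ ^ 4 * g ^ 4 + 4 * p₁ * p₂ ^ 2 * p₃ * q₃ ^ 4 * r₁ ^ 6 * r₃ ^ 2 * g ^ 4 + p₁ * p₂ ^ 2 * p₃ * q₃ ^ 4 * r₁ ^ 8 * g ^ 3 + 4 * p₁ * p₂ ^ 2 * p₃ * q₃ ^ 4 * r₀ ^ 2 * r₂ ^ 2 * r₃ ^ 4 * g ^ 5 + 4 * p₁ * p₂ ^ 2 * p₃ * q₃ ^ 4 * r₀ ^ 2 * r₂ ^ 6 * g ^ 4 + 8 * p₁ * p₂ ^ 2 * p₃ * q₃ ^ 4 * r₀ ^ 2 * r₁ ^ 2 * r₂ ^ 2 * r₃ ^ 2 * g ^ 4 + 4 * p₁ * p₂ ^ 2 * p₃ * q₃ ^ 4 * r₀ ^ 2 * r₁ ^ 4 * r₂ ^ 2 * g ^ 3 + 2 * p₁ * p₂ ^ 2 * p₃ * q₃ ^ 4 * r₀ ^ 4 * r₃ ^ 4 * g ^ 4 + 6 * p₁ * p₂ ^ 2 * p₃ * q₃ ^ 4 * r₀ ^ 4 * r₂ ^ 4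 * g ^ 3 + 4 * p₁ * p₂ ^ 2 * p₃ * q₃ ^ 4 * r₀ ^ 4 * r₁ ^ 2 * r₃ ^ 2 * g ^ 3 + 2 * p₁ * p₂ ^ 2 * p₃ * q₃ ^ 4 * r₀ ^ 4 * r₁ ^ 4 * g ^ 2 + 4 * p₁ * p₂ ^ 2 * p₃ * q₃ ^ 4 * r₀ ^ 6 * r₂ ^ 2 * g ^ 2 + p₁ * p₂ ^ 2 * p₃ * q₃ ^ 4 * r₀ ^ 8 * g + 2 * p₁ * p₂ ^ 2 * p₃ * q₁ ^ 2 * q₃ ^ 2 * r₃ ^ 4 * g ^ 4 + 2 * p₁ * p₂ ^ 2 * p₃ * q₁ ^ 2 * q₃ ^ 2 * r₂ ^ 4 * g ^ 3 + 4 * p₁ * p₂ ^ 2 * p₃ * q₁ ^ 2 * q₃ ^ 2 * r₁ ^ 2 * r₃ ^ 2 * g ^ 3 + 2 * p₁ * p₂ ^ 2 * p₃ * q₁ ^ 2 * q₃ ^ 2 * r₁ ^ 4 * g ^ 2 + 4 * p₁ * p₂ ^ 2 * p₃ * q₁ ^ 2 * q₃ ^ 2 * r₀ ^ 2 * r₂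 ^ 2 * g ^ 2 + 2 * p₁ * p₂ ^ 2 * p₃ * q₁ ^ 2 * q₃ ^ 2 * r₀ ^ 4 * g + p₁ * p₂ ^ 2 * p₃ * q₁ ^ 4 * g + p₁ ^ 2 * p₃ ^ 2 * q₃ ^ 4 * r₃ ^ 8 * g ^ 7 + (-1 : K) * p₁ ^ 2 * p₃ ^ 2 * q₃ ^ 4 * r₃ ^ 8 * g ^ 7 * y ^ 2 + 2 * p₁ ^ 2 * p₃ ^ 2 * q₃ ^ 4 * r₂ ^ 4 * r₃ ^ 4 * g ^ 6 + (-2 : K) * p₁ ^ 2 * p₃ ^ 2 * q₃ ^ 4 * r₂ ^ 4 * r₃ ^ 4 * g ^ 6 * y ^ 2 + p₁ ^ 2 * p₃ ^ 2 * q₃ ^ 4 * r₂ ^ 8 * g ^ 5 + (-1 : K) * p₁ ^ 2 * p₃ ^ 2 * q₃ ^ 4 * r₂ ^ 8 * g ^ 5 * y ^ 2 + 4 * p₁ ^ 2 * p₃ ^ 2 * q₃ ^ 4 * r₁ ^ 2 * r₃ ^ 6 * g ^ 6 + (-4 : K) * p₁ ^ 2 * p₃ ^ 2 * q₃ ^ 4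 * r₁ ^ 2 * r₃ ^ 6 * g ^ 6 * y ^ 2 + 4 * p₁ ^ 2 * p₃ ^ 2 * q₃ ^ 4 * r₁ ^ 2 * r₂ ^ 4 * r₃ ^ 2 * g ^ 5 + (-4 : K) * p₁ ^ 2 * p₃ ^ 2 * q₃ ^ 4 * r₁ ^ 2 * r₂ ^ 4 * r₃ ^ 2 * g ^ 5 * y ^ 2 + 6 * p₁ ^ 2 * p₃ ^ 2 * q₃ ^ 4 * r₁ ^ 4 * r₃ ^ 4 * g ^ 5 + (-6 : K) * p₁ ^ 2 * p₃ ^ 2 * q₃ ^ 4 * r₁ ^ 4 * r₃ ^ 4 * g ^ 5 * y ^ 2 + 2 * p₁ ^ 2 * p₃ ^ 2 * q₃ ^ 4 * r₁ ^ 4 * r₂ ^ 4 * g ^ 4 + (-2 : K) * p₁ ^ 2 * p₃ ^ 2 * q₃ ^ 4 * r₁ ^ 4 * r₂ ^ 4 * g ^ 4 * y ^ 2 + 4 * p₁ ^ 2 * p₃ ^ 2 * q₃ ^ 4 * r₁ ^ 6 * r₃ ^ 2 * g ^ 4 + (-4 : K) * p₁ ^ 2 * p₃ ^ 2 * q₃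 ^ 4 * r₁ ^ 6 * r₃ ^ 2 * g ^ 4 * y ^ 2 + p₁ ^ 2 * p₃ ^ 2 * q₃ ^ 4 * r₁ ^ 8 * g ^ 3 + (-1 : K) * p₁ ^ 2 * p₃ ^ 2 * q₃ ^ 4 * r₁ ^ 8 * g ^ 3 * y ^ 2 + 4 * p₁ ^ 2 * p₃ ^ 2 * q₃ ^ 4 * r₀ ^ 2 * r₂ ^ 2 * r₃ ^ 4 * g ^ 5 + (-4 : K) * p₁ ^ 2 * p₃ ^ 2 * q₃ ^ 4 * r₀ ^ 2 * r₂ ^ 2 * r₃ ^ 4 * g ^ 5 * y ^ 2 + 4 * p₁ ^ 2 * p₃ ^ 2 * q₃ ^ 4 * r₀ ^ 2 * r₂ ^ 6 * g ^ 4 + (-4 : K) * p₁ ^ 2 * p₃ ^ 2 * q₃ ^ 4 * r₀ ^ 2 * r₂ ^ 6 * g ^ 4 * y ^ 2 + 8 * p₁ ^ 2 * p₃ ^ 2 * q₃ ^ 4 * r₀ ^ 2 * r₁ ^ 2 * r₂ ^ 2 * r₃ ^ 2 * g ^ 4 + (-8 : K) * p₁ ^ 2 * p₃ ^ 2 * q₃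 ^ 4 * r₀ ^ 2 * r₁ ^ 2 * r₂ ^ 2 * r₃ ^ 2 * g ^ 4 * y ^ 2 + 4 * p₁ ^ 2 * p₃ ^ 2 * q₃ ^ 4 * r₀ ^ 2 * r₁ ^ 4 * r₂ ^ 2 * g ^ 3 + (-4 : K) * p₁ ^ 2 * p₃ ^ 2 * q₃ ^ 4 * r₀ ^ 2 * r₁ ^ 4 * r₂ ^ 2 * g ^ 3 * y ^ 2 + 2 * p₁ ^ 2 * p₃ ^ 2 * q₃ ^ 4 * r₀ ^ 4 * r₃ ^ 4 * g ^ 4 + (-2 : K) * p₁ ^ 2 * p₃ ^ 2 * q₃ ^ 4 * r₀ ^ 4 * r₃ ^ 4 * g ^ 4 * y ^ 2 + 6 * p₁ ^ 2 * p₃ ^ 2 * q₃ ^ 4 * r₀ ^ 4 * r₂ ^ 4 * g ^ 3 + (-6 : K) * p₁ ^ 2 * p₃ ^ 2 * q₃ ^ 4 * r₀ ^ 4 * r₂ ^ 4 * g ^ 3 * y ^ 2 + 4 * p₁ ^ 2 * p₃ ^ 2 * q₃ ^ 4 * r₀ ^ 4 * r₁ ^ 2 * r₃ ^ 2 * g ^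 3 + (-4 : K) * p₁ ^ 2 * p₃ ^ 2 * q₃ ^ 4 * r₀ ^ 4 * r₁ ^ 2 * r₃ ^ 2 * g ^ 3 * y ^ 2 + 2 * p₁ ^ 2 * p₃ ^ 2 * q₃ ^ 4 * r₀ ^ 4 * r₁ ^ 4 * g ^ 2 + (-2 : K) * p₁ ^ 2 * p₃ ^ 2 * q₃ ^ 4 * r₀ ^ 4 * r₁ ^ 4 * g ^ 2 * y ^ 2 + 4 * p₁ ^ 2 * p₃ ^ 2 * q₃ ^ 4 * r₀ ^ 6 * r₂ ^ 2 * g ^ 2 + (-4 : K) * p₁ ^ 2 * p₃ ^ 2 * q₃ ^ 4 * r₀ ^ 6 * r₂ ^ 2 * g ^ 2 * y ^ 2 + p₁ ^ 2 * p₃ ^ 2 * q₃ ^ 4 * r₀ ^ 8 * g + (-1 : K) * p₁ ^ 2 * p₃ ^ 2 * q₃ ^ 4 * r₀ ^ 8 * g * y ^ 2 + p₁ ^ 2 * p₃ ^ 2 * q₂ ^ 4 * r₃ ^ 4 * g ^ 4 + p₁ ^ 2 * p₃ ^ 2 * q₂ ^ 4 * r₂ ^ 4 * g ^ 3 + 2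 * p₁ ^ 2 * p₃ ^ 2 * q₂ ^ 4 * r₁ ^ 2 * r₃ ^ 2 * g ^ 3 + p₁ ^ 2 * p₃ ^ 2 * q₂ ^ 4 * r₁ ^ 4 * g ^ 2 + 2 * p₁ ^ 2 * p₃ ^ 2 * q₂ ^ 4 * r₀ ^ 2 * r₂ ^ 2 * g ^ 2 + p₁ ^ 2 * p₃ ^ 2 * q₂ ^ 4 * r₀ ^ 4 * g + 2 * p₁ ^ 2 * p₃ ^ 2 * q₁ * q₂ ^ 2 * q₃ * r₃ ^ 4 * g ^ 4 + 2 * p₁ ^ 2 * p₃ ^ 2 * q₁ * q₂ ^ 2 * q₃ * r₂ ^ 4 * g ^ 3 + 4 * p₁ ^ 2 * p₃ ^ 2 * q₁ * q₂ ^ 2 * q₃ * r₁ ^ 2 * r₃ ^ 2 * g ^ 3 + 2 * p₁ ^ 2 * p₃ ^ 2 * q₁ * q₂ ^ 2 * q₃ * r₁ ^ 4 * g ^ 2 + 4 * p₁ ^ 2 * p₃ ^ 2 * q₁ * q₂ ^ 2 * q₃ * r₀ ^ 2 * r₂ ^ 2 * g ^ 2 + 2 * p₁ ^ 2 * p₃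 ^ 2 * q₁ * q₂ ^ 2 * q₃ * r₀ ^ 4 * g + 2 * p₁ ^ 2 * p₃ ^ 2 * q₁ ^ 2 * q₃ ^ 2 * r₃ ^ 4 * g ^ 4 + (-2 : K) * p₁ ^ 2 * p₃ ^ 2 * q₁ ^ 2 * q₃ ^ 2 * r₃ ^ 4 * g ^ 4 * y ^ 2 + 2 * p₁ ^ 2 * p₃ ^ 2 * q₁ ^ 2 * q₃ ^ 2 * r₂ ^ 4 * g ^ 3 + (-2 : K) * p₁ ^ 2 * p₃ ^ 2 * q₁ ^ 2 * q₃ ^ 2 * r₂ ^ 4 * g ^ 3 * y ^ 2 + 4 * p₁ ^ 2 * p₃ ^ 2 * q₁ ^ 2 * q₃ ^ 2 * r₁ ^ 2 * r₃ ^ 2 * g ^ 3 + (-4 : K) * p₁ ^ 2 * p₃ ^ 2 * q₁ ^ 2 * q₃ ^ 2 * r₁ ^ 2 * r₃ ^ 2 * g ^ 3 * y ^ 2 + 2 * p₁ ^ 2 * p₃ ^ 2 * q₁ ^ 2 * q₃ ^ 2 * r₁ ^ 4 * g ^ 2 + (-2 : K) * p₁ ^ 2 * p₃ ^ 2 * q₁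 ^ 2 * q₃ ^ 2 * r₁ ^ 4 * g ^ 2 * y ^ 2 + 4 * p₁ ^ 2 * p₃ ^ 2 * q₁ ^ 2 * q₃ ^ 2 * r₀ ^ 2 * r₂ ^ 2 * g ^ 2 + (-4 : K) * p₁ ^ 2 * p₃ ^ 2 * q₁ ^ 2 * q₃ ^ 2 * r₀ ^ 2 * r₂ ^ 2 * g ^ 2 * y ^ 2 + 2 * p₁ ^ 2 * p₃ ^ 2 * q₁ ^ 2 * q₃ ^ 2 * r₀ ^ 4 * g + (-2 : K) * p₁ ^ 2 * p₃ ^ 2 * q₁ ^ 2 * q₃ ^ 2 * r₀ ^ 4 * g * y ^ 2 + p₁ ^ 2 * p₃ ^ 2 * q₁ ^ 4 * g + (-1 : K) * p₁ ^ 2 * p₃ ^ 2 * q₁ ^ 4 * g * y ^ 2 + p₁ ^ 2 * p₂ ^ 2 * q₂ ^ 2 * q₃ ^ 2 * r₃ ^ 6 * g ^ 5 + p₁ ^ 2 * p₂ ^ 2 * q₂ ^ 2 * q₃ ^ 2 * r₂ ^ 4 * r₃ ^ 2 * g ^ 4 + 3 * p₁ ^ 2 * p₂ ^ 2 * q₂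 ^ 2 * q₃ ^ 2 * r₁ ^ 2 * r₃ ^ 4 * g ^ 4 + p₁ ^ 2 * p₂ ^ 2 * q₂ ^ 2 * q₃ ^ 2 * r₁ ^ 2 * r₂ ^ 4 * g ^ 3 + 3 * p₁ ^ 2 * p₂ ^ 2 * q₂ ^ 2 * q₃ ^ 2 * r₁ ^ 4 * r₃ ^ 2 * g ^ 3 + p₁ ^ 2 * p₂ ^ 2 * q₂ ^ 2 * q₃ ^ 2 * r₁ ^ 6 * g ^ 2 + 2 * p₁ ^ 2 * p₂ ^ 2 * q₂ ^ 2 * q₃ ^ 2 * r₀ ^ 2 * r₂ ^ 2 * r₃ ^ 2 * g ^ 3 + 2 * p₁ ^ 2 * p₂ ^ 2 * q₂ ^ 2 * q₃ ^ 2 * r₀ ^ 2 * r₁ ^ 2 * r₂ ^ 2 * g ^ 2 + p₁ ^ 2 * p₂ ^ 2 * q₂ ^ 2 * q₃ ^ 2 * r₀ ^ 4 * r₃ ^ 2 * g ^ 2 + p₁ ^ 2 * p₂ ^ 2 * q₂ ^ 2 * q₃ ^ 2 * r₀ ^ 4 * r₁ ^ 2 * g + p₁ ^ 2 * p₂ ^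 2 * q₁ * q₃ ^ 3 * r₃ ^ 6 * g ^ 5 + p₁ ^ 2 * p₂ ^ 2 * q₁ * q₃ ^ 3 * r₂ ^ 4 * r₃ ^ 2 * g ^ 4 + 3 * p₁ ^ 2 * p₂ ^ 2 * q₁ * q₃ ^ 3 * r₁ ^ 2 * r₃ ^ 4 * g ^ 4 + p₁ ^ 2 * p₂ ^ 2 * q₁ * q₃ ^ 3 * r₁ ^ 2 * r₂ ^ 4 * g ^ 3 + 3 * p₁ ^ 2 * p₂ ^ 2 * q₁ * q₃ ^ 3 * r₁ ^ 4 * r₃ ^ 2 * g ^ 3 + p₁ ^ 2 * p₂ ^ 2 * q₁ * q₃ ^ 3 * r₁ ^ 6 * g ^ 2 + 2 * p₁ ^ 2 * p₂ ^ 2 * q₁ * q₃ ^ 3 * r₀ ^ 2 * r₂ ^ 2 * r₃ ^ 2 * g ^ 3 + 2 * p₁ ^ 2 * p₂ ^ 2 * q₁ * q₃ ^ 3 * r₀ ^ 2 * r₁ ^ 2 * r₂ ^ 2 * g ^ 2 + p₁ ^ 2 * p₂ ^ 2 * q₁ * q₃ ^ 3 * r₀ ^ 4 * r₃ ^ 2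 * g ^ 2 + p₁ ^ 2 * p₂ ^ 2 * q₁ * q₃ ^ 3 * r₀ ^ 4 * r₁ ^ 2 * g + p₁ ^ 2 * p₂ ^ 2 * q₁ ^ 2 * q₂ ^ 2 * r₃ ^ 2 * g ^ 2 + p₁ ^ 2 * p₂ ^ 2 * q₁ ^ 2 * q₂ ^ 2 * r₁ ^ 2 * g + p₁ ^ 2 * p₂ ^ 2 * q₁ ^ 3 * q₃ * r₃ ^ 2 * g ^ 2 + p₁ ^ 2 * p₂ ^ 2 * q₁ ^ 3 * q₃ * r₁ ^ 2 * g + p₁ ^ 3 * p₃ * q₂ ^ 2 * q₃ ^ 2 * r₃ ^ 6 * g ^ 5 + p₁ ^ 3 * p₃ * q₂ ^ 2 * q₃ ^ 2 * r₂ ^ 4 * r₃ ^ 2 * g ^ 4 + 3 * p₁ ^ 3 * p₃ * q₂ ^ 2 * q₃ ^ 2 * r₁ ^ 2 * r₃ ^ 4 * g ^ 4 + p₁ ^ 3 * p₃ * q₂ ^ 2 * q₃ ^ 2 * r₁ ^ 2 * r₂ ^ 4 * g ^ 3 + 3 * p₁ ^ 3 * p₃ * q₂ ^ 2 * q₃ ^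 2 * r₁ ^ 4 * r₃ ^ 2 * g ^ 3 + p₁ ^ 3 * p₃ * q₂ ^ 2 * q₃ ^ 2 * r₁ ^ 6 * g ^ 2 + 2 * p₁ ^ 3 * p₃ * q₂ ^ 2 * q₃ ^ 2 * r₀ ^ 2 * r₂ ^ 2 * r₃ ^ 2 * g ^ 3 + 2 * p₁ ^ 3 * p₃ * q₂ ^ 2 * q₃ ^ 2 * r₀ ^ 2 * r₁ ^ 2 * r₂ ^ 2 * g ^ 2 + p₁ ^ 3 * p₃ * q₂ ^ 2 * q₃ ^ 2 * r₀ ^ 4 * r₃ ^ 2 * g ^ 2 + p₁ ^ 3 * p₃ * q₂ ^ 2 * q₃ ^ 2 * r₀ ^ 4 * r₁ ^ 2 * g + p₁ ^ 3 * p₃ * q₁ * q₃ ^ 3 * r₃ ^ 6 * g ^ 5 + p₁ ^ 3 * p₃ * q₁ * q₃ ^ 3 * r₂ ^ 4 * r₃ ^ 2 * g ^ 4 + 3 * p₁ ^ 3 * p₃ * q₁ * q₃ ^ 3 * r₁ ^ 2 * r₃ ^ 4 * g ^ 4 + p₁ ^ 3 * p₃ * q₁ * q₃ ^ 3 * r₁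 ^ 2 * r₂ ^ 4 * g ^ 3 + 3 * p₁ ^ 3 * p₃ * q₁ * q₃ ^ 3 * r₁ ^ 4 * r₃ ^ 2 * g ^ 3 + p₁ ^ 3 * p₃ * q₁ * q₃ ^ 3 * r₁ ^ 6 * g ^ 2 + 2 * p₁ ^ 3 * p₃ * q₁ * q₃ ^ 3 * r₀ ^ 2 * r₂ ^ 2 * r₃ ^ 2 * g ^ 3 + 2 * p₁ ^ 3 * p₃ * q₁ * q₃ ^ 3 * r₀ ^ 2 * r₁ ^ 2 * r₂ ^ 2 * g ^ 2 + p₁ ^ 3 * p₃ * q₁ * q₃ ^ 3 * r₀ ^ 4 * r₃ ^ 2 * g ^ 2 + p₁ ^ 3 * p₃ * q₁ * q₃ ^ 3 * r₀ ^ 4 * r₁ ^ 2 * g + p₁ ^ 3 * p₃ * q₁ ^ 2 * q₂ ^ 2 * r₃ ^ 2 * g ^ 2 + p₁ ^ 3 * p₃ * q₁ ^ 2 * q₂ ^ 2 * r₁ ^ 2 * g + p₁ ^ 3 * p₃ * q₁ ^ 3 * q₃ * r₃ ^ 2 * g ^ 2 + p₁ ^ 3 * p₃ * q₁ ^ 3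 * q₃ * r₁ ^ 2 * g + (-1 : K) * p₁ ^ 4 * q₃ ^ 4 * r₃ ^ 8 * g ^ 6 * y ^ 2 + (-2 : K) * p₁ ^ 4 * q₃ ^ 4 * r₂ ^ 4 * r₃ ^ 4 * g ^ 5 * y ^ 2 + (-1 : K) * p₁ ^ 4 * q₃ ^ 4 * r₂ ^ 8 * g ^ 4 * y ^ 2 + (-4 : K) * p₁ ^ 4 * q₃ ^ 4 * r₁ ^ 2 * r₃ ^ 6 * g ^ 5 * y ^ 2 + (-4 : K) * p₁ ^ 4 * q₃ ^ 4 * r₁ ^ 2 * r₂ ^ 4 * r₃ ^ 2 * g ^ 4 * y ^ 2 + (-6 : K) * p₁ ^ 4 * q₃ ^ 4 * r₁ ^ 4 * r₃ ^ 4 * g ^ 4 * y ^ 2 + (-2 : K) * p₁ ^ 4 * q₃ ^ 4 * r₁ ^ 4 * r₂ ^ 4 * g ^ 3 * y ^ 2 + (-4 : K) * p₁ ^ 4 * q₃ ^ 4 * r₁ ^ 6 * r₃ ^ 2 * g ^ 3 * y ^ 2 + (-1 : K) * p₁ ^ 4 * q₃ ^ 4 * r₁ ^ 8 * g ^ 2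 * y ^ 2 + (-4 : K) * p₁ ^ 4 * q₃ ^ 4 * r₀ ^ 2 * r₂ ^ 2 * r₃ ^ 4 * g ^ 4 * y ^ 2 + (-4 : K) * p₁ ^ 4 * q₃ ^ 4 * r₀ ^ 2 * r₂ ^ 6 * g ^ 3 * y ^ 2 + (-8 : K) * p₁ ^ 4 * q₃ ^ 4 * r₀ ^ 2 * r₁ ^ 2 * r₂ ^ 2 * r₃ ^ 2 * g ^ 3 * y ^ 2 + (-4 : K) * p₁ ^ 4 * q₃ ^ 4 * r₀ ^ 2 * r₁ ^ 4 * r₂ ^ 2 * g ^ 2 * y ^ 2 + (-2 : K) * p₁ ^ 4 * q₃ ^ 4 * r₀ ^ 4 * r₃ ^ 4 * g ^ 3 * y ^ 2 + (-6 : K) * p₁ ^ 4 * q₃ ^ 4 * r₀ ^ 4 * r₂ ^ 4 * g ^ 2 * y ^ 2 + (-4 : K) * p₁ ^ 4 * q₃ ^ 4 * r₀ ^ 4 * r₁ ^ 2 * r₃ ^ 2 * g ^ 2 * y ^ 2 + (-2 : K) * p₁ ^ 4 * q₃ ^ 4 * r₀ ^ 4 * r₁ ^ 4 * g * y ^ 2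 + (-4 : K) * p₁ ^ 4 * q₃ ^ 4 * r₀ ^ 6 * r₂ ^ 2 * g * y ^ 2 + (-1 : K) * p₁ ^ 4 * q₃ ^ 4 * r₀ ^ 8 * y ^ 2 + p₁ ^ 4 * q₂ ^ 4 * r₃ ^ 4 * g ^ 3 + p₁ ^ 4 * q₂ ^ 4 * r₂ ^ 4 * g ^ 2 + 2 * p₁ ^ 4 * q₂ ^ 4 * r₁ ^ 2 * r₃ ^ 2 * g ^ 2 + p₁ ^ 4 * q₂ ^ 4 * r₁ ^ 4 * g + 2 * p₁ ^ 4 * q₂ ^ 4 * r₀ ^ 2 * r₂ ^ 2 * g + p₁ ^ 4 * q₂ ^ 4 * r₀ ^ 4 + p₁ ^ 4 * q₁ * q₂ ^ 2 * q₃ * r₃ ^ 4 * g ^ 3 + p₁ ^ 4 * q₁ * q₂ ^ 2 * q₃ * r₂ ^ 4 * g ^ 2 + 2 * p₁ ^ 4 * q₁ * q₂ ^ 2 * q₃ * r₁ ^ 2 * r₃ ^ 2 * g ^ 2 + p₁ ^ 4 * q₁ * q₂ ^ 2 * q₃ * r₁ ^ 4 * g + 2 * p₁ ^ 4 * q₁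 * q₂ ^ 2 * q₃ * r₀ ^ 2 * r₂ ^ 2 * g + p₁ ^ 4 * q₁ * q₂ ^ 2 * q₃ * r₀ ^ 4 + p₁ ^ 4 * q₁ ^ 2 * q₃ ^ 2 * r₃ ^ 4 * g ^ 3 + (-1 : K) * p₁ ^ 4 * q₁ ^ 2 * q₃ ^ 2 * r₃ ^ 4 * g ^ 3 * y ^ 2 + p₁ ^ 4 * q₁ ^ 2 * q₃ ^ 2 * r₂ ^ 4 * g ^ 2 + (-1 : K) * p₁ ^ 4 * q₁ ^ 2 * q₃ ^ 2 * r₂ ^ 4 * g ^ 2 * y ^ 2 + 2 * p₁ ^ 4 * q₁ ^ 2 * q₃ ^ 2 * r₁ ^ 2 * r₃ ^ 2 * g ^ 2 + (-2 : K) * p₁ ^ 4 * q₁ ^ 2 * q₃ ^ 2 * r₁ ^ 2 * r₃ ^ 2 * g ^ 2 * y ^ 2 + p₁ ^ 4 * q₁ ^ 2 * q₃ ^ 2 * r₁ ^ 4 * g + (-1 : K) * p₁ ^ 4 * q₁ ^ 2 * q₃ ^ 2 * r₁ ^ 4 * g * y ^ 2 + 2 * p₁ ^ 4 * q₁ ^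 2 * q₃ ^ 2 * r₀ ^ 2 * r₂ ^ 2 * g + (-2 : K) * p₁ ^ 4 * q₁ ^ 2 * q₃ ^ 2 * r₀ ^ 2 * r₂ ^ 2 * g * y ^ 2 + p₁ ^ 4 * q₁ ^ 2 * q₃ ^ 2 * r₀ ^ 4 + (-1 : K) * p₁ ^ 4 * q₁ ^ 2 * q₃ ^ 2 * r₀ ^ 4 * y ^ 2 + (-1 : K) * p₁ ^ 4 * q₁ ^ 4 * y ^ 2)*h2
  have hPQ := (indep2 h2 hg hkey).2
  rw [hp₁, hp₂, hp₃] at hPQ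
  have hW0 : (r₁*r₃ + r₂^2) * (q₁^2 + q₃^2*((r₀^2 + r₂^2*g)^2 + (r₁^2 + r₃^2*g)^2*g))^2 = 0 := by
    linear_combination hPQ + ((-1 : K) * q₃ ^ 4 * r₀ * r₂ ^ 3 * r₃ ^ 6 * g ^ 5 + (-1 : K) * q₃ ^ 4 * r₀ * r₂ ^ 7 * r₃ ^ 2 * g ^ 4 + (-3 : K) * q₃ ^ 4 * r₀ * r₁ ^ 2 * r₂ ^ 3 * r₃ ^ 4 * g ^ 4 + (-1 : K) * q₃ ^ 4 * r₀ * r₁ ^ 2 * r₂ ^ 7 * g ^ 3 + (-3 : K) * q₃ ^ 4 * r₀ * r₁ ^ 4 * r₂ ^ 3 * r₃ ^ 2 * g ^ 3 + (-1 : K) * q₃ ^ 4 * r₀ * r₁ ^ 6 * r₂ ^ 3 * g ^ 2 + (-1 : K) * q₃ ^ 4 * r₀ ^ 2 * r₃ ^ 8 * g ^ 5 + (-1 : K) * q₃ ^ 4 * r₀ ^ 2 * r₂ ^ 4 * r₃ ^ 4 * g ^ 4 + (-4 : K) * q₃ ^ 4 * r₀ ^ 2 * r₁ ^ 2 * r₃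 ^ 6 * g ^ 4 + (-2 : K) * q₃ ^ 4 * r₀ ^ 2 * r₁ ^ 2 * r₂ ^ 4 * r₃ ^ 2 * g ^ 3 + (-6 : K) * q₃ ^ 4 * r₀ ^ 2 * r₁ ^ 4 * r₃ ^ 4 * g ^ 3 + (-1 : K) * q₃ ^ 4 * r₀ ^ 2 * r₁ ^ 4 * r₂ ^ 4 * g ^ 2 + (-4 : K) * q₃ ^ 4 * r₀ ^ 2 * r₁ ^ 6 * r₃ ^ 2 * g ^ 2 + (-1 : K) * q₃ ^ 4 * r₀ ^ 2 * r₁ ^ 8 * g + (-1 : K) * q₃ ^ 4 * r₀ ^ 3 * r₂ * r₃ ^ 6 * g ^ 4 + (-3 : K) * q₃ ^ 4 * r₀ ^ 3 * r₂ ^ 5 * r₃ ^ 2 * g ^ 3 + (-3 : K) * q₃ ^ 4 * r₀ ^ 3 * r₁ ^ 2 * r₂ * r₃ ^ 4 * g ^ 3 + (-3 : K) * q₃ ^ 4 * r₀ ^ 3 * r₁ ^ 2 * r₂ ^ 5 * g ^ 2 + (-3 : K) * q₃ ^ 4 * r₀ ^ 3 * r₁ ^ 4 * r₂ * r₃ ^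 2 * g ^ 2 + (-1 : K) * q₃ ^ 4 * r₀ ^ 3 * r₁ ^ 6 * r₂ * g + (-2 : K) * q₃ ^ 4 * r₀ ^ 4 * r₂ ^ 2 * r₃ ^ 4 * g ^ 3 + (-4 : K) * q₃ ^ 4 * r₀ ^ 4 * r₁ ^ 2 * r₂ ^ 2 * r₃ ^ 2 * g ^ 2 + (-2 : K) * q₃ ^ 4 * r₀ ^ 4 * r₁ ^ 4 * r₂ ^ 2 * g + (-3 : K) * q₃ ^ 4 * r₀ ^ 5 * r₂ ^ 3 * r₃ ^ 2 * g ^ 2 + (-3 : K) * q₃ ^ 4 * r₀ ^ 5 * r₁ ^ 2 * r₂ ^ 3 * g + (-1 : K) * q₃ ^ 4 * r₀ ^ 6 * r₃ ^ 4 * g ^ 2 + (-2 : K) * q₃ ^ 4 * r₀ ^ 6 * r₁ ^ 2 * r₃ ^ 2 * g + (-1 : K) * q₃ ^ 4 * r₀ ^ 6 * r₁ ^ 4 + (-1 : K) * q₃ ^ 4 * r₀ ^ 7 * r₂ * r₃ ^ 2 * g + (-1 : K) * q₃ ^ 4 * r₀ ^ 7 * r₁ ^ 2 * r₂ + (-1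 : K) * q₂ * q₃ ^ 3 * r₂ ^ 3 * r₃ ^ 6 * g ^ 5 + (-1 : K) * q₂ * q₃ ^ 3 * r₂ ^ 7 * r₃ ^ 2 * g ^ 4 + (-3 : K) * q₂ * q₃ ^ 3 * r₁ ^ 2 * r₂ ^ 3 * r₃ ^ 4 * g ^ 4 + (-1 : K) * q₂ * q₃ ^ 3 * r₁ ^ 2 * r₂ ^ 7 * g ^ 3 + (-3 : K) * q₂ * q₃ ^ 3 * r₁ ^ 4 * r₂ ^ 3 * r₃ ^ 2 * g ^ 3 + (-1 : K) * q₂ * q₃ ^ 3 * r₁ ^ 6 * r₂ ^ 3 * g ^ 2 + (-1 : K) * q₂ * q₃ ^ 3 * r₀ * r₃ ^ 8 * g ^ 5 + (-1 : K) * q₂ * q₃ ^ 3 * r₀ * r₂ ^ 4 * r₃ ^ 4 * g ^ 4 + (-4 : K) * q₂ * q₃ ^ 3 * r₀ * r₁ ^ 2 * r₃ ^ 6 * g ^ 4 + (-2 : K) * q₂ * q₃ ^ 3 * r₀ * r₁ ^ 2 * r₂ ^ 4 * r₃ ^ 2 * g ^ 3 + (-6 : K) * q₂ * q₃ ^ 3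 * r₀ * r₁ ^ 4 * r₃ ^ 4 * g ^ 3 + (-1 : K) * q₂ * q₃ ^ 3 * r₀ * r₁ ^ 4 * r₂ ^ 4 * g ^ 2 + (-4 : K) * q₂ * q₃ ^ 3 * r₀ * r₁ ^ 6 * r₃ ^ 2 * g ^ 2 + (-1 : K) * q₂ * q₃ ^ 3 * r₀ * r₁ ^ 8 * g + (-1 : K) * q₂ * q₃ ^ 3 * r₀ ^ 2 * r₂ * r₃ ^ 6 * g ^ 4 + (-3 : K) * q₂ * q₃ ^ 3 * r₀ ^ 2 * r₂ ^ 5 * r₃ ^ 2 * g ^ 3 + (-3 : K) * q₂ * q₃ ^ 3 * r₀ ^ 2 * r₁ ^ 2 * r₂ * r₃ ^ 4 * g ^ 3 + (-3 : K) * q₂ * q₃ ^ 3 * r₀ ^ 2 * r₁ ^ 2 * r₂ ^ 5 * g ^ 2 + (-3 : K) * q₂ * q₃ ^ 3 * r₀ ^ 2 * r₁ ^ 4 * r₂ * r₃ ^ 2 * g ^ 2 + (-1 : K) * q₂ * q₃ ^ 3 * r₀ ^ 2 * r₁ ^ 6 * r₂ * g + (-2 : K) * q₂ * q₃ ^ 3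 * r₀ ^ 3 * r₂ ^ 2 * r₃ ^ 4 * g ^ 3 + (-4 : K) * q₂ * q₃ ^ 3 * r₀ ^ 3 * r₁ ^ 2 * r₂ ^ 2 * r₃ ^ 2 * g ^ 2 + (-2 : K) * q₂ * q₃ ^ 3 * r₀ ^ 3 * r₁ ^ 4 * r₂ ^ 2 * g + (-3 : K) * q₂ * q₃ ^ 3 * r₀ ^ 4 * r₂ ^ 3 * r₃ ^ 2 * g ^ 2 + (-3 : K) * q₂ * q₃ ^ 3 * r₀ ^ 4 * r₁ ^ 2 * r₂ ^ 3 * g + (-1 : K) * q₂ * q₃ ^ 3 * r₀ ^ 5 * r₃ ^ 4 * g ^ 2 + (-2 : K) * q₂ * q₃ ^ 3 * r₀ ^ 5 * r₁ ^ 2 * r₃ ^ 2 * g + (-1 : K) * q₂ * q₃ ^ 3 * r₀ ^ 5 * r₁ ^ 4 + (-1 : K) * q₂ * q₃ ^ 3 * r₀ ^ 6 * r₂ * r₃ ^ 2 * g + (-1 : K) * q₂ * q₃ ^ 3 * r₀ ^ 6 * r₁ ^ 2 * r₂ + (-1 : K) * q₂ ^ 2 * q₃ ^ 2 * r₃ ^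 8 * g ^ 5 + (-1 : K) * q₂ ^ 2 * q₃ ^ 2 * r₂ ^ 4 * r₃ ^ 4 * g ^ 4 + (-2 : K) * q₂ ^ 2 * q₃ ^ 2 * r₁ * r₂ ^ 2 * r₃ ^ 5 * g ^ 4 + (-4 : K) * q₂ ^ 2 * q₃ ^ 2 * r₁ ^ 2 * r₃ ^ 6 * g ^ 4 + (-2 : K) * q₂ ^ 2 * q₃ ^ 2 * r₁ ^ 2 * r₂ ^ 4 * r₃ ^ 2 * g ^ 3 + (-4 : K) * q₂ ^ 2 * q₃ ^ 2 * r₁ ^ 3 * r₂ ^ 2 * r₃ ^ 3 * g ^ 3 + (-6 : K) * q₂ ^ 2 * q₃ ^ 2 * r₁ ^ 4 * r₃ ^ 4 * g ^ 3 + (-1 : K) * q₂ ^ 2 * q₃ ^ 2 * r₁ ^ 4 * r₂ ^ 4 * g ^ 2 + (-2 : K) * q₂ ^ 2 * q₃ ^ 2 * r₁ ^ 5 * r₂ ^ 2 * r₃ * g ^ 2 + (-4 : K) * q₂ ^ 2 * q₃ ^ 2 * r₁ ^ 6 * r₃ ^ 2 * g ^ 2 + (-1 : K) * q₂ ^ 2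 * q₃ ^ 2 * r₁ ^ 8 * g + (-2 : K) * q₂ ^ 2 * q₃ ^ 2 * r₀ ^ 2 * r₂ ^ 2 * r₃ ^ 4 * g ^ 3 + (-2 : K) * q₂ ^ 2 * q₃ ^ 2 * r₀ ^ 2 * r₁ * r₃ ^ 5 * g ^ 3 + (-4 : K) * q₂ ^ 2 * q₃ ^ 2 * r₀ ^ 2 * r₁ ^ 2 * r₂ ^ 2 * r₃ ^ 2 * g ^ 2 + (-4 : K) * q₂ ^ 2 * q₃ ^ 2 * r₀ ^ 2 * r₁ ^ 3 * r₃ ^ 3 * g ^ 2 + (-2 : K) * q₂ ^ 2 * q₃ ^ 2 * r₀ ^ 2 * r₁ ^ 4 * r₂ ^ 2 * g + (-2 : K) * q₂ ^ 2 * q₃ ^ 2 * r₀ ^ 2 * r₁ ^ 5 * r₃ * g + (-1 : K) * q₂ ^ 2 * q₃ ^ 2 * r₀ ^ 4 * r₃ ^ 4 * g ^ 2 + (-2 : K) * q₂ ^ 2 * q₃ ^ 2 * r₀ ^ 4 * r₁ ^ 2 * r₃ ^ 2 * g + (-1 : K) * q₂ ^ 2 * q₃ ^ 2 * r₀ ^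 4 * r₁ ^ 4 + (-1 : K) * q₁ * q₃ ^ 3 * r₃ ^ 8 * g ^ 5 + (-2 : K) * q₁ * q₃ ^ 3 * r₂ ^ 4 * r₃ ^ 4 * g ^ 4 + (-1 : K) * q₁ * q₃ ^ 3 * r₂ ^ 8 * g ^ 3 + (-3 : K) * q₁ * q₃ ^ 3 * r₁ * r₂ ^ 2 * r₃ ^ 5 * g ^ 4 + (-1 : K) * q₁ * q₃ ^ 3 * r₁ * r₂ ^ 6 * r₃ * g ^ 3 + (-4 : K) * q₁ * q₃ ^ 3 * r₁ ^ 2 * r₃ ^ 6 * g ^ 4 + (-4 : K) * q₁ * q₃ ^ 3 * r₁ ^ 2 * r₂ ^ 4 * r₃ ^ 2 * g ^ 3 + (-6 : K) * q₁ * q₃ ^ 3 * r₁ ^ 3 * r₂ ^ 2 * r₃ ^ 3 * g ^ 3 + (-6 : K) * q₁ * q₃ ^ 3 * r₁ ^ 4 * r₃ ^ 4 * g ^ 3 + (-2 : K) * q₁ * q₃ ^ 3 * r₁ ^ 4 * r₂ ^ 4 * g ^ 2 + (-3 : K) * q₁ * q₃ ^ 3 * r₁ ^ 5 * r₂ ^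 2 * r₃ * g ^ 2 + (-4 : K) * q₁ * q₃ ^ 3 * r₁ ^ 6 * r₃ ^ 2 * g ^ 2 + (-1 : K) * q₁ * q₃ ^ 3 * r₁ ^ 8 * g + (-1 : K) * q₁ * q₃ ^ 3 * r₀ * r₂ * r₃ ^ 6 * g ^ 4 + (-1 : K) * q₁ * q₃ ^ 3 * r₀ * r₂ ^ 5 * r₃ ^ 2 * g ^ 3 + (-3 : K) * q₁ * q₃ ^ 3 * r₀ * r₁ ^ 2 * r₂ * r₃ ^ 4 * g ^ 3 + (-1 : K) * q₁ * q₃ ^ 3 * r₀ * r₁ ^ 2 * r₂ ^ 5 * g ^ 2 + (-3 : K) * q₁ * q₃ ^ 3 * r₀ * r₁ ^ 4 * r₂ * r₃ ^ 2 * g ^ 2 + (-1 : K) * q₁ * q₃ ^ 3 * r₀ * r₁ ^ 6 * r₂ * g + (-3 : K) * q₁ * q₃ ^ 3 * r₀ ^ 2 * r₂ ^ 2 * r₃ ^ 4 * g ^ 3 + (-3 : K) * q₁ * q₃ ^ 3 * r₀ ^ 2 * r₂ ^ 6 * g ^ 2 + (-3 : K) * q₁ * q₃ ^ 3 * r₀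 ^ 2 * r₁ * r₃ ^ 5 * g ^ 3 + (-3 : K) * q₁ * q₃ ^ 3 * r₀ ^ 2 * r₁ * r₂ ^ 4 * r₃ * g ^ 2 + (-6 : K) * q₁ * q₃ ^ 3 * r₀ ^ 2 * r₁ ^ 2 * r₂ ^ 2 * r₃ ^ 2 * g ^ 2 + (-6 : K) * q₁ * q₃ ^ 3 * r₀ ^ 2 * r₁ ^ 3 * r₃ ^ 3 * g ^ 2 + (-3 : K) * q₁ * q₃ ^ 3 * r₀ ^ 2 * r₁ ^ 4 * r₂ ^ 2 * g + (-3 : K) * q₁ * q₃ ^ 3 * r₀ ^ 2 * r₁ ^ 5 * r₃ * g + (-2 : K) * q₁ * q₃ ^ 3 * r₀ ^ 3 * r₂ ^ 3 * r₃ ^ 2 * g ^ 2 + (-2 : K) * q₁ * q₃ ^ 3 * r₀ ^ 3 * r₁ ^ 2 * r₂ ^ 3 * g + (-1 : K) * q₁ * q₃ ^ 3 * r₀ ^ 4 * r₃ ^ 4 * g ^ 2 + (-3 : K) * q₁ * q₃ ^ 3 * r₀ ^ 4 * r₂ ^ 4 * g + (-3 : K) * q₁ * q₃ ^ 3 * r₀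 ^ 4 * r₁ * r₂ ^ 2 * r₃ * g + (-2 : K) * q₁ * q₃ ^ 3 * r₀ ^ 4 * r₁ ^ 2 * r₃ ^ 2 * g + (-1 : K) * q₁ * q₃ ^ 3 * r₀ ^ 4 * r₁ ^ 4 + (-1 : K) * q₁ * q₃ ^ 3 * r₀ ^ 5 * r₂ * r₃ ^ 2 * g + (-1 : K) * q₁ * q₃ ^ 3 * r₀ ^ 5 * r₁ ^ 2 * r₂ + (-1 : K) * q₁ * q₃ ^ 3 * r₀ ^ 6 * r₂ ^ 2 + (-1 : K) * q₁ * q₃ ^ 3 * r₀ ^ 6 * r₁ * r₃ + (-1 : K) * q₁ * q₂ * q₃ ^ 2 * r₂ * r₃ ^ 6 * g ^ 4 + (-1 : K) * q₁ * q₂ * q₃ ^ 2 * r₂ ^ 5 * r₃ ^ 2 * g ^ 3 + (-3 : K) * q₁ * q₂ * q₃ ^ 2 * r₁ ^ 2 * r₂ * r₃ ^ 4 * g ^ 3 + (-1 : K) * q₁ * q₂ * q₃ ^ 2 * r₁ ^ 2 * r₂ ^ 5 * g ^ 2 + (-3 : K) * q₁ * q₂ * q₃ ^ 2 * r₁ ^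 4 * r₂ * r₃ ^ 2 * g ^ 2 + (-1 : K) * q₁ * q₂ * q₃ ^ 2 * r₁ ^ 6 * r₂ * g + (-2 : K) * q₁ * q₂ * q₃ ^ 2 * r₀ ^ 2 * r₂ ^ 3 * r₃ ^ 2 * g ^ 2 + (-2 : K) * q₁ * q₂ * q₃ ^ 2 * r₀ ^ 2 * r₁ ^ 2 * r₂ ^ 3 * g + (-1 : K) * q₁ * q₂ * q₃ ^ 2 * r₀ ^ 4 * r₂ * r₃ ^ 2 * g + (-1 : K) * q₁ * q₂ * q₃ ^ 2 * r₀ ^ 4 * r₁ ^ 2 * r₂ + (-1 : K) * q₁ * q₂ ^ 2 * q₃ * r₂ ^ 2 * r₃ ^ 4 * g ^ 3 + (-2 : K) * q₁ * q₂ ^ 2 * q₃ * r₁ * r₃ ^ 5 * g ^ 3 + (-2 : K) * q₁ * q₂ ^ 2 * q₃ * r₁ ^ 2 * r₂ ^ 2 * r₃ ^ 2 * g ^ 2 + (-4 : K) * q₁ * q₂ ^ 2 * q₃ * r₁ ^ 3 * r₃ ^ 3 * g ^ 2 + (-1 : K) * q₁ * q₂ ^ 2 * q₃ * r₁ ^ 4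 * r₂ ^ 2 * g + (-2 : K) * q₁ * q₂ ^ 2 * q₃ * r₁ ^ 5 * r₃ * g + (-1 : K) * q₁ * q₂ ^ 2 * q₃ * r₀ ^ 2 * r₃ ^ 4 * g ^ 2 + (-2 : K) * q₁ * q₂ ^ 2 * q₃ * r₀ ^ 2 * r₁ ^ 2 * r₃ ^ 2 * g + (-1 : K) * q₁ * q₂ ^ 2 * q₃ * r₀ ^ 2 * r₁ ^ 4 + (-1 : K) * q₁ ^ 2 * q₃ ^ 2 * r₂ ^ 2 * r₃ ^ 4 * g ^ 3 + (-2 : K) * q₁ ^ 2 * q₃ ^ 2 * r₁ * r₃ ^ 5 * g ^ 3 + (-2 : K) * q₁ ^ 2 * q₃ ^ 2 * r₁ ^ 2 * r₂ ^ 2 * r₃ ^ 2 * g ^ 2 + (-4 : K) * q₁ ^ 2 * q₃ ^ 2 * r₁ ^ 3 * r₃ ^ 3 * g ^ 2 + (-1 : K) * q₁ ^ 2 * q₃ ^ 2 * r₁ ^ 4 * r₂ ^ 2 * g + (-2 : K) * q₁ ^ 2 * q₃ ^ 2 * r₁ ^ 5 * r₃ * g + (-1 : K) * q₁ ^ 2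 * q₃ ^ 2 * r₀ * r₂ ^ 3 * r₃ ^ 2 * g ^ 2 + (-1 : K) * q₁ ^ 2 * q₃ ^ 2 * r₀ * r₁ ^ 2 * r₂ ^ 3 * g + (-2 : K) * q₁ ^ 2 * q₃ ^ 2 * r₀ ^ 2 * r₃ ^ 4 * g ^ 2 + (-4 : K) * q₁ ^ 2 * q₃ ^ 2 * r₀ ^ 2 * r₁ ^ 2 * r₃ ^ 2 * g + (-2 : K) * q₁ ^ 2 * q₃ ^ 2 * r₀ ^ 2 * r₁ ^ 4 + (-1 : K) * q₁ ^ 2 * q₃ ^ 2 * r₀ ^ 3 * r₂ * r₃ ^ 2 * g + (-1 : K) * q₁ ^ 2 * q₃ ^ 2 * r₀ ^ 3 * r₁ ^ 2 * r₂ + (-1 : K) * q₁ ^ 2 * q₂ * q₃ * r₂ ^ 3 * r₃ ^ 2 * g ^ 2 + (-1 : K) * q₁ ^ 2 * q₂ * q₃ * r₁ ^ 2 * r₂ ^ 3 * g + (-1 : K) * q₁ ^ 2 * q₂ * q₃ * r₀ * r₃ ^ 4 * g ^ 2 + (-2 : K) * q₁ ^ 2 * q₂ * q₃ * r₀ * r₁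 ^ 2 * r₃ ^ 2 * g + (-1 : K) * q₁ ^ 2 * q₂ * q₃ * r₀ * r₁ ^ 4 + (-1 : K) * q₁ ^ 2 * q₂ * q₃ * r₀ ^ 2 * r₂ * r₃ ^ 2 * g + (-1 : K) * q₁ ^ 2 * q₂ * q₃ * r₀ ^ 2 * r₁ ^ 2 * r₂ + (-1 : K) * q₁ ^ 2 * q₂ ^ 2 * r₃ ^ 4 * g ^ 2 + (-2 : K) * q₁ ^ 2 * q₂ ^ 2 * r₁ ^ 2 * r₃ ^ 2 * g + (-1 : K) * q₁ ^ 2 * q₂ ^ 2 * r₁ ^ 4 + (-1 : K) * q₁ ^ 3 * q₃ * r₃ ^ 4 * g ^ 2 + (-1 : K) * q₁ ^ 3 * q₃ * r₂ ^ 4 * g + (-1 : K) * q₁ ^ 3 * q₃ * r₁ * r₂ ^ 2 * r₃ * g + (-2 : K) * q₁ ^ 3 * q₃ * r₁ ^ 2 * r₃ ^ 2 * g + (-1 : K) * q₁ ^ 3 * q₃ * r₁ ^ 4 + (-1 : K) * q₁ ^ 3 * q₃ * r₀ * r₂ * r₃ ^ 2 * g + (-1 : K) * q₁ ^ 3 *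 q₃ * r₀ * r₁ ^ 2 * r₂ + (-1 : K) * q₁ ^ 3 * q₃ * r₀ ^ 2 * r₂ ^ 2 + (-1 : K) * q₁ ^ 3 * q₃ * r₀ ^ 2 * r₁ * r₃ + (-1 : K) * q₁ ^ 3 * q₂ * r₂ * r₃ ^ 2 * g + (-1 : K) * q₁ ^ 3 * q₂ * r₁ ^ 2 * r₂)*h2
  rcases mul_eq_zero.mp hW0 with hW | hW
  swap
  · exact absurd (pow_eq_zero_iff two_ne_zero |>.mp hW) hvpne
  have hW' : r₂^2 = r₁*r₃ := by linear_combination hW - (r₁*r₃)*h2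
  by_cases hr1 : r₁ = 0
  · subst hr1
    have hr2 : r₂ = 0 := pow_eq_zero_iff two_ne_zero |>.mp (by linear_combination hW')
    subst hr2
    have hr3 : r₃ ≠ 0 := by
      intro h0
      subst h0
      exact hg' ⟨r₀^2, by ring⟩
    have hden : r₃^4*g + (0:K)^4 ≠ 0 := by
      simpa using mul_ne_zero (pow_ne_zero 4 hr3) hgne
    refine ⟨r₀*r₃, r₃^2*g, r₃, 0, ?_, ?_⟩
    · intro h
      have h3 : r₃^2*g*r₃ ≠ 0 := mul_ne_zero (mul_ne_zero (pow_ne_zero 2 hr3) hgne) hr3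
      exact h3 (h.symm.trans (by ring))
    · rw [eq_div_iff hden]
      ring
  · have hden : r₂^4*g + r₁^4 ≠ 0 := by
      intro h0
      by_cases hr2 : r₂ = 0
      · subst hr2
        refine hr1 (pow_eq_zero_iff (by norm_num : (4:ℕ) ≠ 0) |>.mp (?_ : r₁^4 = 0))
        linear_combination h0
      · refine hg ⟨r₁^2/r₂^2, ?_⟩
        field_simp
        linear_combination h0 - (g*r₂^4)*h2
    refine ⟨r₀*r₂ + r₁^2, r₂*r₃*g + r₀*r₁, r₂, r₁, ?_, ?_⟩
    · intro habd
      have hz : r₁*(r₁^2 + r₃^2*g) = 0 := by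
        linear_combination habd + (r₃*g)*hW' + (r₁*r₃^2*g)*h2
      rcases mul_eq_zero.mp hz with h | h
      · exact hr1 h
      · obtain ⟨h1, -⟩ := indep2 h2 hg (show r₁^2 + r₃^2*g = 0^2 + 0^2*g by linear_combination h)
        exact hr1 h1
    · rw [eq_div_iff hden]
      linear_combination (g^3*(r₂^6 + r₂^4*r₁*r₃ + r₂^2*r₁^2*r₃^2 + r₁^3*r₃^3))*hW' + (r₁ ^ 2 * r₂ ^ 4 * r₃ ^ 2 * g ^ 3 + r₁ ^ 4 * r₃ ^ 4 * g ^ 3 + r₁ ^ 4 * r₂ ^ 4 * g ^ 2 + r₁ ^ 6 * r₃ ^ 2 * g ^ 2 + (-2 : K) * r₀ * r₁ * r₂ ^ 3 * r₃ ^ 3 * g ^ 3 + (-2 : K) * r₀ * r₁ ^ 6 * r₂ * g + r₀ ^ 2 * r₂ ^ 6 * g ^ 2 + (-3 : K) * r₀ ^ 2 * r₁ ^ 2 * r₂ ^ 2 * r₃ ^ 2 * g ^ 2 + (-2 : K) * r₀ ^ 2 * r₁ ^ 4 * r₂ ^ 2 * g + (-2 : K) * r₀ ^ 3 * r₁ ^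 2 * r₂ ^ 3 * g + (-2 : K) * r₀ ^ 3 * r₁ ^ 3 * r₂ * r₃ * g)*h2
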